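/- arXiv:1804.07348 — 9 statements merged into one kernel-verified Lean document; each statement's English description precedes it below -/
import Mathlib

section
/- Let P be a pair partition of {1,…,2k} and let I ⊆ {1,…,2k} be a nonempty interval of consecutive integers. Then 2·[I|P] = |Aug_P(I)| − |Def_P(I)|. Moreover Aug_P(I) ∖ Def_P(I) is exactly the union of those pairs {j¹,j²} ∈ P for which I({j¹,j²}) ⊆ I. -/
/-- A fixed-point-free involution `π` of `Fin (2*k)` encodes a pair partition of
`{1,…,2k}`: the blocks are the pairs `{x, π x}`. -/
def IsPairPartition (k : ℕ) (π : Equiv.Perm (Fin (2*k))) : Prop :=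
  (∀ x, π (π x) = x) ∧ (∀ x, π x ≠ x)

/-- `[S|P]` : the number of intervals `I({j¹,j²}) = {j¹+1,…,j²}` associated to the pairs of the
pair partition which are subsets of `S`. -/
def pairCount (k : ℕ) (π : Equiv.Perm (Fin (2*k))) (S : Finset (Fin (2*k))) : ℕ :=
  (Finset.univ.filter (fun x => x < π x ∧ Finset.Ioc x (π x) ⊆ S)).card

/-- `Aug_P(J)` : `J` together with the element immediately to the left of `J` (if it exists
and is paired by the pair partition with an element of `J`). -/
def AugP (k : ℕ) (π : Equiv.Perm (Fin (2*k))) (J : Finset (Fin (2*k))) :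
    Finset (Fin (2*k)) :=
  J ∪ Finset.univ.filter (fun m => m ∉ J ∧ (∃ a ∈ J, (m:ℕ) + 1 = (a:ℕ)) ∧ π m ∈ J)

/-- `Def_P(J)` : the elements of `J` not paired by the pair partition with an element
of `Aug_P(J)`. -/
def DefP (k : ℕ) (π : Equiv.Perm (Fin (2*k))) (J : Finset (Fin (2*k))) :
    Finset (Fin (2*k)) :=
  J.filter (fun x => π x ∉ AugP k π J)

theorem two_mul_pairCount_interval_eq_aug_sub_def
    (k : ℕ) (π : Equiv.Perm (Fin (2*k))) (hπ : IsPairPartition k π)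
    (a b : Fin (2*k)) (hab : a ≤ b) (I : Finset (Fin (2*k))) (hI : I = Finset.Icc a b) :
    (2 * pairCount k π I : ℤ) = ((AugP k π I).card : ℤ) - ((DefP k π I).card : ℤ) ∧
    AugP k π I \ DefP k π I =
      Finset.univ.filter (fun y => Finset.Ioc (min y (π y)) (max y (π y)) ⊆ I) := by
  obtain ⟨hinv, hne⟩ := hπ
  subst hI
  set I := Finset.Icc a b with hIdef
  have hab' : a.val ≤ b.val := hab
  have memI' : ∀ y : Fin (2*k), y ∈ I ↔ a.val ≤ y.val ∧ y.val ≤ b.val := by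
    intro y; rw [hIdef, Finset.mem_Icc, Fin.le_def, Fin.le_def]
  have memAug : ∀ y : Fin (2*k), y ∈ AugP k π I ↔
      (a.val ≤ y.val ∧ y.val ≤ b.val) ∨
      (y.val + 1 = a.val ∧ a.val ≤ (π y).val ∧ (π y).val ≤ b.val) := by
    intro y
    simp only [AugP, Finset.mem_union, Finset.mem_filter, Finset.mem_univ, true_and]
    constructor
    · rintro (h | ⟨hyI, ⟨c, hcI, hc⟩, hpy⟩)
      · exact Or.inl ((memI' y).mp h)
      · rw [memI' c] at hcI
        rw [memI' y] at hyI
        right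
        exact ⟨by omega, (memI' _).mp hpy⟩
    · rintro (h | ⟨h1, h2⟩)
      · exact Or.inl ((memI' y).mpr h)
      · right
        refine ⟨?_, ⟨a, (memI' a).mpr ⟨le_refl _, hab'⟩, h1⟩, (memI' _).mpr h2⟩
        rw [memI' y]; omega
  have memDef : ∀ y : Fin (2*k), y ∈ DefP k π I ↔ y ∈ I ∧ π y ∉ AugP k π I := by
    intro y; simp [DefP, Finset.mem_filter]
  have hIoc : ∀ x z : Fin (2*k), x < z →
      (Finset.Ioc x z ⊆ I ↔ (a.val ≤ x.val + 1 ∧ z.val ≤ b.val)) := by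
    intro x z hxz
    have hxz' : x.val < z.val := hxz
    constructor
    · intro hs
      have hz := (memI' z).mp (hs (Finset.mem_Ioc.mpr ⟨hxz, le_refl z⟩))
      have hlt : x.val + 1 < 2 * k := by have := z.isLt; omega
      have hw := (memI' ⟨x.val + 1, hlt⟩).mp (hs (Finset.mem_Ioc.mpr
        ⟨Fin.lt_def.mpr (by simp), Fin.le_def.mpr (by simpa using hxz')⟩))
      simp only at hw
      omega
    · rintro ⟨h1, h2⟩ w hw
      rw [Finset.mem_Ioc] at hw
      have hw1 : x.val < w.val := hw.1
      have hw2 : w.val ≤ z.val := hw.2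
      rw [memI' w]
      omega
  have hset : AugP k π I \ DefP k π I =
      Finset.univ.filter (fun y => Finset.Ioc (min y (π y)) (max y (π y)) ⊆ I) := by
    ext y
    have hy2 : π (π y) = y := hinv y
    simp only [Finset.mem_sdiff, Finset.mem_filter, Finset.mem_univ, true_and]
    rw [memDef y]
    rcases lt_trichotomy y (π y) with h | h | h
    · have h' : y.val < (π y).val := h
      rw [min_eq_left h.le, max_eq_right h.le, hIoc y (π y) h,
        memAug y, memI' y, memAug (π y), hy2]
      omega
    · exact absurd h.symm (hne y)
    · have h' : (π y).val < y.val := h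
      rw [min_eq_right h.le, max_eq_left h.le, hIoc (π y) y h,
        memAug y, memI' y, memAug (π y), hy2]
      omega
  set P := Finset.univ.filter (fun x : Fin (2*k) => x < π x ∧ Finset.Ioc x (π x) ⊆ I) with hP
  have hPC : pairCount k π I = P.card := rfl
  have hU : Finset.univ.filter (fun y => Finset.Ioc (min y (π y)) (max y (π y)) ⊆ I)
      = P ∪ P.image π := by
    ext y
    have hy2 : π (π y) = y := hinv y
    simp only [hP, Finset.mem_union, Finset.mem_filter, Finset.mem_univ, true_and,
      Finset.mem_image]
    constructor
    · intro hy
      rcases lt_trichotomy y (π y) with h | h | h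
      · left; rw [min_eq_left h.le, max_eq_right h.le] at hy; exact ⟨h, hy⟩
      · exact absurd h.symm (hne y)
      · right
        refine ⟨π y, ⟨?_, ?_⟩, hy2⟩ <;> rw [hy2]
        · exact h
        · rw [min_eq_right h.le, max_eq_left h.le] at hy; exact hy
    · rintro (⟨h1, h2⟩ | ⟨x, ⟨hx1, hx2⟩, rfl⟩)
      · rw [min_eq_left h1.le, max_eq_right h1.le]; exact h2
      · rw [hinv x, min_eq_right hx1.le, max_eq_left hx1.le]
        exact hx2
  have hdisj : Disjoint P (P.image π) := by
    rw [Finset.disjoint_left]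
    rintro y hy hz
    simp only [hP, Finset.mem_filter, Finset.mem_univ, true_and, Finset.mem_image] at hy hz
    obtain ⟨x, ⟨hx1, _⟩, rfl⟩ := hz
    rw [hinv x] at hy
    exact (lt_asymm hx1) hy.1
  have hcardU : (P ∪ P.image π).card = 2 * P.card := by
    rw [Finset.card_union_of_disjoint hdisj,
      Finset.card_image_of_injective _ π.injective]
    ring
  have hsub : DefP k π I ⊆ AugP k π I := by
    intro y hy
    rw [memDef y] at hy
    rw [memAug y]
    exact Or.inl ((memI' y).mp hy.1)
  refine ⟨?_, hset⟩
  have h1 : (AugP k π I \ DefP k π I).card = (AugP k π I).card - (DefP k π I).card :=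
    Finset.card_sdiff_of_subset hsub
  have h2 : (DefP k π I).card ≤ (AugP k π I).card := Finset.card_le_card hsub
  have h3 : (AugP k π I \ DefP k π I).card = 2 * P.card := by rw [hset, hU, hcardU]
  rw [hPC]
  omega
end

section
/- Let S_0, S_1 ⊆ {1,…,n} and let y ∈ ℝ^n satisfy f_{S_0}(y) = f_{S_1}(y) = 0. Then f_{S_0∪S_1}(y) + Σ_{i ∈ S_0∩S_1} y_i is strictly positive if S_0 ⊆ S_1 or S_1 ⊆ S_0, and is strictly negative otherwise. In particular, if in addition Σ_{i ∈ S_0∩S_1} y_i ≥ 0 and neither of S_0, S_1 contains the other, then f_{S_0∪S_1}(y) < 0. -/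
/-- The hypotheses on the function `q`. -/
def qCond (q : ℕ → ℕ) : Prop :=
  q 0 = 1 ∧ (∀ a b, q a + q b < q (max a b + 1)) ∧ ∀ a, 3 * q a ≤ q (a + 1)

/-- The affine form `f_S(y) = −q(|S|) + Σ_{i∈S} y_i`. -/
def fS (n : ℕ) (q : ℕ → ℕ) (S : Finset (Fin n)) (y : Fin n → ℝ) : ℝ :=
  -(q S.card : ℝ) + ∑ i ∈ S, y i

theorem monotone_pair_dichotomy
    (n : ℕ) (hn : 1 ≤ n) (q : ℕ → ℕ) (hq : qCond q)
    (S₀ S₁ : Finset (Fin n)) (y : Fin n → ℝ)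
    (h₀ : fS n q S₀ y = 0) (h₁ : fS n q S₁ y = 0) :
    ((S₀ ⊆ S₁ ∨ S₁ ⊆ S₀) → 0 < fS n q (S₀ ∪ S₁) y + ∑ i ∈ S₀ ∩ S₁, y i) ∧
    (¬(S₀ ⊆ S₁ ∨ S₁ ⊆ S₀) → fS n q (S₀ ∪ S₁) y + ∑ i ∈ S₀ ∩ S₁, y i < 0) ∧
    (0 ≤ ∑ i ∈ S₀ ∩ S₁, y i → ¬(S₀ ⊆ S₁ ∨ S₁ ⊆ S₀) → fS n q (S₀ ∪ S₁) y < 0) := by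
  obtain ⟨hq0, hqlt, hq3⟩ := hq
  have hmono : Monotone q := monotone_nat_of_le_succ fun a => le_trans (by omega) (hq3 a)
  have hpos : ∀ a, 0 < q a := fun a => by
    have := hmono (Nat.zero_le a); omega
  have hs0 : ∑ i ∈ S₀, y i = (q S₀.card : ℝ) := by
    have := h₀; unfold fS at this; linarith
  have hs1 : ∑ i ∈ S₁, y i = (q S₁.card : ℝ) := by
    have := h₁; unfold fS at this; linarith
  have hsum : ∑ i ∈ S₀ ∪ S₁, y i + ∑ i ∈ S₀ ∩ S₁, y i
      = (q S₀.card : ℝ) + (q S₁.card : ℝ) := by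
    rw [Finset.sum_union_inter, hs0, hs1]
  have key : fS n q (S₀ ∪ S₁) y + ∑ i ∈ S₀ ∩ S₁, y i
      = -(q (S₀ ∪ S₁).card : ℝ) + (q S₀.card : ℝ) + (q S₁.card : ℝ) := by
    unfold fS; linarith
  refine ⟨?_, ?_, ?_⟩
  · rintro (h | h)
    · rw [Finset.union_eq_right.mpr h] at key ⊢
      have hr : (0:ℝ) < q S₀.card := by exact_mod_cast hpos S₀.card
      rw [key]; linarith
    · rw [Finset.union_eq_left.mpr h] at key ⊢
      have hr : (0:ℝ) < q S₁.card := by exact_mod_cast hpos S₁.card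
      rw [key]; linarith
  · intro h
    push_neg at h
    obtain ⟨h1, h2⟩ := h
    have hc1 : S₁.card < (S₀ ∪ S₁).card :=
      Finset.card_lt_card ⟨Finset.subset_union_right, fun hsub => h1 fun i hi =>
        hsub (Finset.mem_union_left _ hi)⟩
    have hc0 : S₀.card < (S₀ ∪ S₁).card :=
      Finset.card_lt_card ⟨Finset.subset_union_left, fun hsub => h2 fun i hi =>
        hsub (Finset.mem_union_right _ hi)⟩
    have hlt : q S₀.card + q S₁.card < q (S₀ ∪ S₁).card :=
      lt_of_lt_of_le (hqlt _ _) (hmono (by omega))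
    have hr : (q S₀.card:ℝ) + q S₁.card < q (S₀ ∪ S₁).card := by exact_mod_cast hlt
    rw [key]; linarith
  · intro hnn h
    have h2 := (by
      push_neg at h
      obtain ⟨h1, h2⟩ := h
      have hc1 : S₁.card < (S₀ ∪ S₁).card :=
        Finset.card_lt_card ⟨Finset.subset_union_right, fun hsub => h1 fun i hi =>
          hsub (Finset.mem_union_left _ hi)⟩
      have hc0 : S₀.card < (S₀ ∪ S₁).card :=
        Finset.card_lt_card ⟨Finset.subset_union_left, fun hsub => h2 fun i hi =>
          hsub (Finset.mem_union_right _ hi)⟩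
      have hlt : q S₀.card + q S₁.card < q (S₀ ∪ S₁).card :=
        lt_of_lt_of_le (hqlt _ _) (hmono (by omega))
      have hr : (q S₀.card:ℝ) + q S₁.card < q (S₀ ∪ S₁).card := by exact_mod_cast hlt
      rw [key]; linarith :
      fS n q (S₀ ∪ S₁) y + ∑ i ∈ S₀ ∩ S₁, y i < 0)
    linarith
end

section
/- Let y be a boundary point of the region Ω = ∩_{∅≠S⊆{1,…,n}} {f_S > 0} and let S_1,…,S_r be distinct subsets of {1,…,n} with f_{S_1}(y) = ⋯ = f_{S_r}(y) = 0. Then none of the S_i is empty, and the collection {S_1,…,S_r} is monotone, i.e. totally ordered by inclusion. -/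
/-- The region `Ω = ∩_{∅≠S⊆{1,…,n}} {f_S > 0}`. -/
def Omega (n : ℕ) (q : ℕ → ℕ) : Set (Fin n → ℝ) :=
  {y | ∀ S : Finset (Fin n), S.Nonempty → 0 < fS n q S y}

lemma q_pos {q : ℕ → ℕ} (hq : qCond q) : ∀ a, 0 < q a := by
  intro a
  induction a with
  | zero => simp [hq.1]
  | succ a ih => have := hq.2.2 a; omega

lemma q_mono {q : ℕ → ℕ} (hq : qCond q) : Monotone q := by
  apply monotone_nat_of_le_succ
  intro a
  have := hq.2.2 a
  have := q_pos hq a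
  omega

lemma closure_nonneg (n : ℕ) (q : ℕ → ℕ) (y : Fin n → ℝ)
    (hy : y ∈ closure (Omega n q)) (T : Finset (Fin n)) (hT : T.Nonempty) :
    0 ≤ fS n q T y := by
  have hcont : Continuous (fun z : Fin n → ℝ => fS n q T z) := by
    unfold fS
    exact continuous_const.add (continuous_finset_sum _ fun i _ => continuous_apply i)
  have hsub : closure (Omega n q) ⊆ {z | 0 ≤ fS n q T z} := by
    apply closure_minimal
    · intro z hz
      exact le_of_lt (hz T hT)
    · exact isClosed_le continuous_const hcont
  exact hsub hy

theorem vanishing_forms_at_boundary_are_monotone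
    (n : ℕ) (hn : 1 ≤ n) (q : ℕ → ℕ) (hq : qCond q)
    (y : Fin n → ℝ) (hy : y ∈ frontier (Omega n q))
    (r : ℕ) (S : Fin r → Finset (Fin n)) (hS : Function.Injective S)
    (hz : ∀ i, fS n q (S i) y = 0) :
    (∀ i, (S i).Nonempty) ∧ (∀ i j, S i ⊆ S j ∨ S j ⊆ S i) := by
  have hycl : y ∈ closure (Omega n q) := hy.1
  have hne : ∀ i, (S i).Nonempty := by
    intro i
    rw [Finset.nonempty_iff_ne_empty]
    intro hemp
    have := hz i
    rw [hemp] at this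
    simp [fS, hq.1] at this
  refine ⟨hne, ?_⟩
  intro i j
  by_contra hc
  push_neg at hc
  obtain ⟨hAB, hBA⟩ := hc
  set A := S i with hA
  set B := S j with hB
  -- sums
  have hsA : ∑ k ∈ A, y k = (q A.card : ℝ) := by
    have := hz i; unfold fS at this; linarith
  have hsB : ∑ k ∈ B, y k = (q B.card : ℝ) := by
    have := hz j; unfold fS at this; linarith
  have hinter : 0 ≤ ∑ k ∈ A ∩ B, y k := by
    rcases Finset.eq_empty_or_nonempty (A ∩ B) with h | h
    · simp [h]
    · have := closure_nonneg n q y hycl (A ∩ B) h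
      unfold fS at this
      have : (0:ℝ) ≤ (q (A ∩ B).card : ℝ) := by positivity
      linarith [closure_nonneg n q y hycl (A ∩ B) h,
        show fS n q (A ∩ B) y = -(q (A ∩ B).card : ℝ) + ∑ k ∈ A ∩ B, y k from rfl]
  have hunion : 0 ≤ fS n q (A ∪ B) y :=
    closure_nonneg n q y hycl (A ∪ B) ((hne i).mono Finset.subset_union_left)
  unfold fS at hunion
  have hsum : ∑ k ∈ A ∪ B, y k + ∑ k ∈ A ∩ B, y k = ∑ k ∈ A, y k + ∑ k ∈ B, y k :=
    Finset.sum_union_inter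
  -- cardinality facts
  have hAss : A ⊂ A ∪ B := by
    refine Finset.ssubset_iff_subset_ne.2 ⟨Finset.subset_union_left, ?_⟩
    intro h
    exact hBA (by rw [← Finset.union_eq_left]; exact h.symm)
  have hBss : B ⊂ A ∪ B := by
    refine Finset.ssubset_iff_subset_ne.2 ⟨Finset.subset_union_right, ?_⟩
    intro h
    exact hAB (by rw [← Finset.union_eq_right]; exact h.symm)
  have hcard : max A.card B.card + 1 ≤ (A ∪ B).card := by
    have h1 := Finset.card_lt_card hAss
    have h2 := Finset.card_lt_card hBss
    omega
  have hqlt : (q A.card : ℝ) + (q B.card : ℝ) < (q ((A ∪ B).card) : ℝ) := by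
    have h1 := hq.2.1 A.card B.card
    have h2 := q_mono hq hcard
    exact_mod_cast lt_of_lt_of_le h1 h2
  linarith
end

section
/- Let S_1 ⊊ S_2 ⊊ ⋯ ⊊ S_r be a strictly increasing chain of nonempty subsets of {1,…,n}. Then the set Ω({S_1,…,S_r}) = ∂Ω ∩ (∩_{i=1}^r L_{S_i}) ∩ (∪_{∅≠S∉{S_1,…,S_r}} L_S)^c is a nonempty convex set, relatively open in the affine subspace ∩_{i=1}^r L_{S_i} ⊆ ℝ^n, and this affine subspace has codimension r. -/
/-- The hyperplane `L_S = {f_S = 0}`. -/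
def Lhyp (n : ℕ) (q : ℕ → ℕ) (S : Finset (Fin n)) : Set (Fin n → ℝ) :=
  {y | fS n q S y = 0}

namespace Strat

variable {q : ℕ → ℕ}

lemma q_pos (hq : qCond q) (a : ℕ) : 1 ≤ q a := by
  induction a with
  | zero => simp [hq.1]
  | succ a ih => have := hq.2.2 a; omega

lemma q_mono (hq : qCond q) : Monotone q :=
  monotone_nat_of_le_succ (fun a => by have := hq.2.2 a; have := q_pos hq a; omega)

/-- `Qn 0 = 0`, else `q`. -/
def Qn (q : ℕ → ℕ) : ℕ → ℕ := fun s => if s = 0 then 0 else q s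

lemma Qn_pos_eq (hs : 1 ≤ s) : Qn q s = q s := by simp [Qn]; omega

lemma Qn_mono (hq : qCond q) : Monotone (Qn q) := by
  apply monotone_nat_of_le_succ
  intro s
  rcases Nat.eq_zero_or_pos s with h | h
  · simp [h, Qn]
  · simp only [Qn, if_neg (by omega : ¬ s = 0), if_neg (by omega : ¬ s + 1 = 0)]
    exact q_mono hq (by omega)

/-- increments of `Qn`. -/
def Dl (q : ℕ → ℕ) : ℕ → ℕ := fun s => Qn q (s+1) - Qn q s

lemma Qn_succ (hq : qCond q) (s : ℕ) : Qn q (s+1) = Qn q s + Dl q s :=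
  (Nat.add_sub_cancel' (Qn_mono hq (Nat.le_succ s))).symm

lemma Dl_pos (hq : qCond q) (s : ℕ) : 1 ≤ Dl q s := by
  have h1 := hq.2.2 s
  have h2 := q_pos hq s
  have h2' := q_pos hq (s+1)
  rcases Nat.eq_zero_or_pos s with h | h
  · subst h; simp only [Dl, Qn]; norm_num; exact q_pos hq 1
  · simp only [Dl, Qn, if_neg (by omega : ¬ s = 0), if_neg (by omega : ¬ s + 1 = 0)]
    omega

lemma Dl_strict (hq : qCond q) (s : ℕ) : Dl q s < Dl q (s+1) := by
  have h1 := hq.2.2 s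
  have h2 := hq.2.2 (s+1)
  have h3 := q_pos hq s
  have h4 := q_pos hq (s+1)
  rcases Nat.eq_zero_or_pos s with h | h
  · subst h
    have h5 := hq.2.2 0
    have h6 := hq.2.2 1
    have h7 := q_pos hq 1
    simp only [Dl, Qn]
    norm_num at h5 h6 h7 ⊢
    omega
  · simp only [Dl, Qn, if_neg (by omega : ¬ s = 0), if_neg (by omega : ¬ s + 1 = 0),
      if_neg (by omega : ¬ s + 1 + 1 = 0)]
    omega

lemma Dl_smono (hq : qCond q) : StrictMono (Dl q) :=
  strictMono_nat_of_lt_succ (Dl_strict hq)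

lemma Qn_add (hq : qCond q) (x m : ℕ) :
    Qn q (x + m) = Qn q x + ∑ s ∈ Finset.range m, Dl q (x + s) := by
  induction m with
  | zero => simp
  | succ m ih =>
    rw [Finset.sum_range_succ, ← Nat.add_assoc, Qn_succ hq (x + m), ih]
    ring

end Strat

namespace Strat
variable {q : ℕ → ℕ}

lemma shift_le (hq : qCond q) {x y : ℕ} (h : x ≤ y) (a : ℕ) :
    ∑ s ∈ Finset.range a, Dl q (x + s) ≤ ∑ s ∈ Finset.range a, Dl q (y + s) :=
  Finset.sum_le_sum fun s _ => (Dl_smono hq).monotone (by omega)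

lemma shift_lt (hq : qCond q) {x y : ℕ} (h : x < y) {a : ℕ} (ha : 1 ≤ a) :
    ∑ s ∈ Finset.range a, Dl q (x + s) < ∑ s ∈ Finset.range a, Dl q (y + s) := by
  apply Finset.sum_lt_sum_of_nonempty (by simp; omega)
  intro s _
  exact Dl_smono hq (by omega)

lemma cheb (hq : qCond q) (x : ℕ) {a d : ℕ} (h : a ≤ d) :
    d * ∑ s ∈ Finset.range a, Dl q (x + s) + (d - a) * a
      ≤ a * ∑ s ∈ Finset.range d, Dl q (x + s) := by
  obtain ⟨e, rfl⟩ := Nat.exists_eq_add_of_le h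
  set Sa := ∑ s ∈ Finset.range a, Dl q (x + s) with hSa
  have hsplit : ∑ s ∈ Finset.range (a + e), Dl q (x + s)
      = Sa + ∑ s ∈ Finset.range e, Dl q (x + (a + s)) := by
    rw [Finset.sum_range_add]
  have h1 : Sa + a ≤ a * Dl q (x + a) := by
    have : ∑ s ∈ Finset.range a, (Dl q (x + s) + 1) ≤ ∑ _s ∈ Finset.range a, Dl q (x + a) := by
      apply Finset.sum_le_sum
      intro s hs
      simp only [Finset.mem_range] at hs
      have := Dl_smono hq (show x + s < x + a by omega)
      omega
    simpa [Finset.sum_add_distrib, Finset.sum_const, mul_comm] using this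
  have h2 : e * Dl q (x + a) ≤ ∑ s ∈ Finset.range e, Dl q (x + (a + s)) := by
    calc e * Dl q (x + a) = ∑ _s ∈ Finset.range e, Dl q (x + a) := by simp [Finset.sum_const, Nat.mul_comm]
    _ ≤ _ := Finset.sum_le_sum fun s _ => (Dl_smono hq).monotone (by omega)
  rw [hsplit]
  have : (a + e - a) = e := by omega
  rw [this]
  nlinarith [h1, h2]

lemma numN (hq : qCond q) {p P a d : ℕ} (hpP : p ≤ P) (ha : 1 ≤ a) (had : a ≤ d) :
    (d * Qn q (p + a) + a * Qn q P ≤ d * Qn q p + a * Qn q (P + d)) ∧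
    (p < P ∨ a < d →
      d * Qn q (p + a) + a * Qn q P < d * Qn q p + a * Qn q (P + d)) := by
  have hda : 1 ≤ d := le_trans ha had
  rw [Qn_add hq p a, Qn_add hq P d]
  set Sp := ∑ s ∈ Finset.range a, Dl q (p + s) with hSp
  set SP := ∑ s ∈ Finset.range a, Dl q (P + s) with hSP
  set Sd := ∑ s ∈ Finset.range d, Dl q (P + s) with hSd
  have hch := cheb hq P had
  rw [← hSP, ← hSd] at hch
  have hsh := shift_le hq hpP a
  rw [← hSp, ← hSP] at hsh
  constructor
  · nlinarith [hch, hsh]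
  · rintro (h | h)
    · have := shift_lt hq h ha
      rw [← hSp, ← hSP] at this
      nlinarith [hch, this]
    · have : 1 ≤ (d - a) * a := by
        have : 1 ≤ d - a := by omega
        nlinarith
      nlinarith [hch, hsh, this]

end Strat

namespace Strat
open Finset

section Chain

variable {n r : ℕ} {S : Fin r → Finset (Fin n)}

/-- Extended chain: `Dch 0 = ∅`, `Dch (k+1) = S k` for `k < r`, `univ` beyond. -/
def Dch (n r : ℕ) (S : Fin r → Finset (Fin n)) : ℕ → Finset (Fin n) := fun k =>
  if k = 0 then ∅ else if h : k - 1 < r then S ⟨k - 1, h⟩ else Finset.univ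

lemma Dch_zero : Dch n r S 0 = ∅ := by simp [Dch]

lemma Dch_pos {k : ℕ} (hk : 1 ≤ k) (h : k - 1 < r) : Dch n r S k = S ⟨k - 1, h⟩ := by
  rw [Dch, if_neg (by omega), dif_pos h]

lemma Dch_succ {k : ℕ} (h : k < r) : Dch n r S (k + 1) = S ⟨k, h⟩ := by
  simp [Dch, h]

lemma Dch_big {k : ℕ} (h : r < k) : Dch n r S k = Finset.univ := by
  have h1 : ¬ k = 0 := by omega
  have h2 : ¬ k - 1 < r := by omega
  simp [Dch, h1, h2]

variable (hchain : ∀ i j : Fin r, i < j → S i ⊂ S j)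

include hchain in
lemma Dch_mono {k l : ℕ} (h : k ≤ l) : Dch n r S k ⊆ Dch n r S l := by
  rcases Nat.eq_zero_or_pos k with hk | hk
  · subst hk; rw [Dch_zero]; exact Finset.empty_subset _
  rcases eq_or_lt_of_le h with rfl | hkl
  · exact Finset.Subset.refl _
  by_cases hl : l - 1 < r
  · have hk' : k - 1 < r := by omega
    rw [Dch_pos hk hk', Dch_pos (by omega : 1 ≤ l) hl]
    rcases eq_or_lt_of_le (show k - 1 ≤ l - 1 by omega) with heq | hlt
    · simp [heq]
    · exact (hchain _ _ (Fin.mk_lt_mk.mpr hlt)).subset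
  · rw [Dch_big (show r < l by omega)]
    exact Finset.subset_univ _

variable (hne : ∀ i, (S i).Nonempty)

include hchain hne in
lemma Dch_ssub {k l : ℕ} (h : k < l) (hl : l ≤ r) : Dch n r S k ⊂ Dch n r S l := by
  have hl' : l - 1 < r := by omega
  rcases Nat.eq_zero_or_pos k with hk | hk
  · subst hk; rw [Dch_zero, Dch_pos (by omega : 1 ≤ l) hl']
    exact Finset.empty_ssubset.mpr (hne _)
  · have hk' : k - 1 < r := by omega
    rw [Dch_pos hk hk', Dch_pos (by omega : 1 ≤ l) hl']
    exact hchain _ _ (Fin.mk_lt_mk.mpr (show k - 1 < l - 1 by omega))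

/-- cardinalities along the chain -/
def cD (n r : ℕ) (S : Fin r → Finset (Fin n)) (k : ℕ) : ℕ := (Dch n r S k).card

include hchain hne in
lemma cD_lt {k l : ℕ} (h : k < l) (hl : l ≤ r) : cD n r S k < cD n r S l :=
  Finset.card_lt_card (Dch_ssub hchain hne h hl)

include hchain in
lemma cD_le {k l : ℕ} (h : k ≤ l) : cD n r S k ≤ cD n r S l :=
  Finset.card_le_card (Dch_mono hchain h)

lemma cD_zero : cD n r S 0 = 0 := by simp [cD, Dch_zero]

lemma levE (i : Fin n) : ∃ k, i ∈ Dch n r S k :=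
  ⟨r + 1, by rw [Dch_big (by omega)]; exact Finset.mem_univ i⟩

/-- level of a coordinate -/
def lev (n r : ℕ) (S : Fin r → Finset (Fin n)) (i : Fin n) : ℕ := Nat.find (levE (S := S) i)

lemma lev_spec (i : Fin n) : i ∈ Dch n r S (lev n r S i) := Nat.find_spec (levE (S := S) i)

lemma lev_le {i : Fin n} {k : ℕ} (h : i ∈ Dch n r S k) : lev n r S i ≤ k :=
  Nat.find_le h

lemma lev_pos (i : Fin n) : 1 ≤ lev n r S i := by
  by_contra h
  have h0 : lev n r S i = 0 := by omega
  have h1 := lev_spec (S := S) i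
  rw [h0, Dch_zero] at h1
  exact absurd h1 (Finset.notMem_empty i)

lemma lev_le_top (i : Fin n) : lev n r S i ≤ r + 1 :=
  lev_le (by rw [Dch_big (by omega)]; exact Finset.mem_univ i)

end Chain

section Point
open Finset

variable {n r : ℕ} {S : Fin r → Finset (Fin n)} {q : ℕ → ℕ}

/-- level values -/
noncomputable def vlv (n r : ℕ) (S : Fin r → Finset (Fin n)) (q : ℕ → ℕ) (k : ℕ) : ℝ :=
  if k ≤ r then ((Qn q (cD n r S k) : ℝ) - (Qn q (cD n r S (k - 1)) : ℝ))
      / ((cD n r S k : ℝ) - (cD n r S (k - 1) : ℝ))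
  else (q n : ℝ) + 1

/-- the witness point -/
noncomputable def ypt (n r : ℕ) (S : Fin r → Finset (Fin n)) (q : ℕ → ℕ) : Fin n → ℝ :=
  fun i => vlv n r S q (lev n r S i)

variable (hq : qCond q) (hchain : ∀ i j : Fin r, i < j → S i ⊂ S j)
  (hne : ∀ i, (S i).Nonempty)

include hq in
lemma Qn_lt {a b : ℕ} (h : a < b) : Qn q a < Qn q b := by
  have e : b = a + (b - a) := by omega
  rw [e, Qn_add hq]
  have : 0 < ∑ s ∈ Finset.range (b - a), Dl q (a + s) := by
    apply Finset.sum_pos (fun s _ => Dl_pos hq _)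
    simp; omega
  omega

include hq hchain hne in
lemma vlv_pos {k : ℕ} (hk : 1 ≤ k) : 0 < vlv n r S q k := by
  rw [vlv]
  split_ifs with h
  · have hlt : cD n r S (k - 1) < cD n r S k := cD_lt hchain hne (by omega) h
    apply div_pos
    · have := Qn_lt hq (q := q) hlt
      simp only [sub_pos, Nat.cast_lt]
      exact this
    · simp only [sub_pos, Nat.cast_lt]; exact hlt
  · positivity

include hq hchain hne in
lemma ypt_nonneg (i : Fin n) : 0 ≤ ypt n r S q i :=
  (vlv_pos hq hchain hne (lev_pos i)).le

include hq hchain hne in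
lemma sum_layer {k : ℕ} (hk1 : 1 ≤ k) (hk : k ≤ r) :
    ∑ i ∈ Dch n r S k \ Dch n r S (k - 1), ypt n r S q i
      = (Qn q (cD n r S k) : ℝ) - (Qn q (cD n r S (k - 1)) : ℝ) := by
  have hlev : ∀ i ∈ Dch n r S k \ Dch n r S (k - 1), ypt n r S q i = vlv n r S q k := by
    intro i hi
    rw [Finset.mem_sdiff] at hi
    have h1 : lev n r S i ≤ k := lev_le hi.1
    have h2 : ¬ lev n r S i ≤ k - 1 := by
      intro hle
      exact hi.2 (Dch_mono hchain hle (lev_spec i))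
    have : lev n r S i = k := by omega
    rw [ypt, this]
  rw [Finset.sum_congr rfl hlev, Finset.sum_const, Finset.card_sdiff_of_subset (Dch_mono hchain (by omega))]
  have hlt : cD n r S (k - 1) < cD n r S k := cD_lt hchain hne (by omega) hk
  have hcast : ((cD n r S k - cD n r S (k - 1) : ℕ) : ℝ)
      = (cD n r S k : ℝ) - (cD n r S (k - 1) : ℝ) := by
    push_cast [Nat.cast_sub hlt.le]; ring
  rw [nsmul_eq_mul, vlv, if_pos hk]
  show ((cD n r S k - cD n r S (k-1) : ℕ) : ℝ) * _ = _
  rw [hcast, mul_div_cancel₀]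
  intro h0
  rw [sub_eq_zero] at h0
  exact absurd (Nat.cast_injective h0).symm (by omega)

include hq hchain hne in
lemma sum_Dch : ∀ k, k ≤ r → ∑ i ∈ Dch n r S k, ypt n r S q i = (Qn q (cD n r S k) : ℝ) := by
  intro k
  induction k with
  | zero => intro _; simp [Dch_zero, cD_zero, Qn]
  | succ k ih =>
    intro hk
    have hsub : Dch n r S k ⊆ Dch n r S (k + 1) := Dch_mono hchain (by omega)
    have := Finset.sum_sdiff (f := ypt n r S q) hsub
    have hl := sum_layer hq hchain hne (k := k + 1) (by omega) hk
    simp only [Nat.add_sub_cancel] at hl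
    rw [← this, hl, ih (by omega)]
    ring

end Point

section Main
open Finset

variable {n r : ℕ} {S : Fin r → Finset (Fin n)} {q : ℕ → ℕ}
variable (hq : qCond q) (hchain : ∀ i j : Fin r, i < j → S i ⊂ S j)
  (hne : ∀ i, (S i).Nonempty)

include hq hchain hne in
lemma numR {k p a : ℕ} (hk : k + 1 ≤ r) (hp : p ≤ cD n r S k) (ha : 1 ≤ a)
    (had : a ≤ cD n r S (k + 1) - cD n r S k) :
    ((Qn q (p + a) : ℝ) ≤ (Qn q p : ℝ) + a * vlv n r S q (k + 1)) ∧
    (p < cD n r S k ∨ a < cD n r S (k + 1) - cD n r S k →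
      ((Qn q (p + a) : ℝ) < (Qn q p : ℝ) + a * vlv n r S q (k + 1))) := by
  set P := cD n r S k with hP
  set C := cD n r S (k + 1) with hC
  have hPC : P < C := cD_lt hchain hne (by omega) hk
  set d := C - P with hd
  have hPd : P + d = C := by omega
  have hdR : (0 : ℝ) < (d : ℝ) := by
    have : 1 ≤ d := by omega
    exact_mod_cast by omega
  have hv : vlv n r S q (k + 1) = ((Qn q C : ℝ) - (Qn q P : ℝ)) / (d : ℝ) := by
    rw [vlv, if_pos hk]
    simp only [Nat.add_sub_cancel, ← hP, ← hC]
    congr 1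
    rw [hd, Nat.cast_sub hPC.le]
  have hnum := numN hq hp ha had
  rw [hPd] at hnum
  have key : ((d * Qn q (p + a) + a * Qn q P : ℕ) : ℝ) ≤ ((d * Qn q p + a * Qn q C : ℕ) : ℝ) :=
    Nat.cast_le.mpr hnum.1
  push_cast at key
  constructor
  · rw [hv, ← mul_le_mul_iff_of_pos_right hdR]
    have hd0 : (d : ℝ) ≠ 0 := ne_of_gt hdR
    field_simp
    nlinarith [key]
  · intro hcase
    have key2 : ((d * Qn q (p + a) + a * Qn q P : ℕ) : ℝ) < ((d * Qn q p + a * Qn q C : ℕ) : ℝ) :=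
      Nat.cast_lt.mpr (hnum.2 hcase)
    push_cast at key2
    rw [hv, ← mul_lt_mul_iff_of_pos_right hdR]
    have hd0 : (d : ℝ) ≠ 0 := ne_of_gt hdR
    field_simp
    nlinarith [key2]

include hq hchain hne in
lemma main_ineq : ∀ k, k ≤ r → ∀ T : Finset (Fin n), T ⊆ Dch n r S k →
    ((Qn q T.card : ℝ) ≤ ∑ i ∈ T, ypt n r S q i) ∧
    (T.Nonempty → (∀ j, j ≤ r → T ≠ Dch n r S j) →
      (Qn q T.card : ℝ) < ∑ i ∈ T, ypt n r S q i) := by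
  intro k
  induction k with
  | zero =>
    intro _ T hT
    rw [Dch_zero, Finset.subset_empty] at hT
    subst hT
    constructor
    · simp [Qn]
    · intro hne' _
      exact absurd rfl (Finset.nonempty_iff_ne_empty.mp hne')
  | succ k ih =>
    intro hk T hT
    set T' := T ∩ Dch n r S k with hT'
    set A := T \ Dch n r S k with hA
    have hcard : T'.card + A.card = T.card := Finset.card_inter_add_card_sdiff T _
    have hsum : (∑ i ∈ T', ypt n r S q i) + ∑ i ∈ A, ypt n r S q i = ∑ i ∈ T, ypt n r S q i :=
      Finset.sum_inter_add_sum_sdiff T _ _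
    have hAlev : ∀ i ∈ A, ypt n r S q i = vlv n r S q (k + 1) := by
      intro i hi
      rw [hA, Finset.mem_sdiff] at hi
      have h1 : lev n r S i ≤ k + 1 := lev_le (hT hi.1)
      have h2 : ¬ lev n r S i ≤ k := fun hle => hi.2 (Dch_mono hchain hle (lev_spec i))
      have : lev n r S i = k + 1 := by omega
      rw [ypt, this]
    have hAsum : ∑ i ∈ A, ypt n r S q i = (A.card : ℝ) * vlv n r S q (k + 1) := by
      rw [Finset.sum_congr rfl hAlev, Finset.sum_const, nsmul_eq_mul]
    rcases Nat.eq_zero_or_pos A.card with hA0 | hA1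
    · -- T ⊆ Dch k
      have hAe : A = ∅ := Finset.card_eq_zero.mp hA0
      have hTk : T ⊆ Dch n r S k := by
        intro i hi
        by_contra hcon
        have : i ∈ A := by rw [hA, Finset.mem_sdiff]; exact ⟨hi, hcon⟩
        rw [hAe] at this
        exact absurd this (Finset.notMem_empty i)
      exact ih (by omega) T hTk
    · -- A nonempty
      have hT'sub : T' ⊆ Dch n r S k := Finset.inter_subset_right
      have hp : T'.card ≤ cD n r S k := Finset.card_le_card hT'sub
      have hAsub : A ⊆ Dch n r S (k+1) \ Dch n r S k := by
        intro i hi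
        rw [hA, Finset.mem_sdiff] at hi
        rw [Finset.mem_sdiff]
        exact ⟨hT hi.1, hi.2⟩
      have hamax : A.card ≤ cD n r S (k+1) - cD n r S k := by
        have := Finset.card_le_card hAsub
        rw [Finset.card_sdiff_of_subset (Dch_mono hchain (by omega))] at this
        exact this
      have hnr := numR hq hchain hne hk hp hA1 hamax
      have hIH := (ih (by omega) T' hT'sub).1
      have hTc : T.card = T'.card + A.card := hcard.symm
      constructor
      · rw [hTc]
        calc (Qn q (T'.card + A.card) : ℝ)
            ≤ (Qn q T'.card : ℝ) + A.card * vlv n r S q (k + 1) := hnr.1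
          _ ≤ (∑ i ∈ T', ypt n r S q i) + A.card * vlv n r S q (k + 1) := by linarith
          _ = ∑ i ∈ T, ypt n r S q i := by rw [← hAsum, hsum]
      · intro _ hnot
        by_cases hcrit : T'.card = cD n r S k ∧ A.card = cD n r S (k+1) - cD n r S k
        · -- then T = Dch (k+1), contradiction
          exfalso
          have hTcard : T.card = cD n r S (k+1) := by
            have h1 : cD n r S k ≤ cD n r S (k+1) := cD_le hchain (by omega)
            omega
          have : T = Dch n r S (k + 1) :=
            Finset.eq_of_subset_of_card_le hT (by rw [hTcard]; exact le_refl _)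
          exact hnot (k+1) hk this
        · have hstrict := hnr.2 (by
            rcases Nat.lt_or_ge T'.card (cD n r S k) with h | h
            · exact Or.inl h
            · right
              have : T'.card = cD n r S k := by omega
              rcases Nat.lt_or_ge A.card (cD n r S (k+1) - cD n r S k) with h2 | h2
              · exact h2
              · exact absurd ⟨this, by omega⟩ hcrit)
          rw [hTc]
          calc (Qn q (T'.card + A.card) : ℝ)
              < (Qn q T'.card : ℝ) + A.card * vlv n r S q (k + 1) := hstrict
            _ ≤ (∑ i ∈ T', ypt n r S q i) + A.card * vlv n r S q (k + 1) := by linarith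
            _ = ∑ i ∈ T, ypt n r S q i := by rw [← hAsum, hsum]

end Main

end Strat

namespace Strat
section PointFacts
open Finset

variable {n r : ℕ} {S : Fin r → Finset (Fin n)} {q : ℕ → ℕ}
variable (hq : qCond q) (hchain : ∀ i j : Fin r, i < j → S i ⊂ S j)
  (hne : ∀ i, (S i).Nonempty)

include hq hchain hne in
lemma ypt_on_chain (i : Fin r) : fS n q (S i) (ypt n r S q) = 0 := by
  have hi : (i : ℕ) < r := i.isLt
  have hD : Dch n r S ((i : ℕ) + 1) = S i := by rw [Dch_succ hi]
  have hsum := sum_Dch hq hchain hne ((i : ℕ) + 1) (by omega)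
  rw [hD] at hsum
  have hcard : cD n r S ((i : ℕ) + 1) = (S i).card := by rw [cD, hD]
  rw [hcard] at hsum
  have hpos : 1 ≤ (S i).card := Finset.card_pos.mpr (hne i)
  rw [fS, hsum, Qn_pos_eq hpos]
  ring

include hq hchain hne in
lemma ypt_off_chain (T : Finset (Fin n)) (hT : T.Nonempty) (hnr : T ∉ Set.range S) :
    0 < fS n q T (ypt n r S q) := by
  by_cases hsub : T ⊆ Dch n r S r
  · have hmain := (main_ineq hq hchain hne r (le_refl r) T hsub).2 hT ?_
    · rw [fS]
      have : (Qn q T.card : ℝ) = (q T.card : ℝ) := by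
        rw [Qn_pos_eq (Finset.card_pos.mpr hT)]
      linarith [hmain, this ▸ hmain]
    · intro j hj hTe
      rcases Nat.eq_zero_or_pos j with h0 | h1
      · subst h0; rw [Dch_zero] at hTe
        exact absurd hTe (Finset.nonempty_iff_ne_empty.mp hT)
      · have hj' : j - 1 < r := by omega
        rw [Dch_pos h1 hj'] at hTe
        exact hnr ⟨⟨j - 1, hj'⟩, hTe.symm⟩
  · obtain ⟨i, hiT, hiD⟩ := Finset.not_subset.mp hsub
    have hlev : lev n r S i = r + 1 := by
      have h1 := lev_le_top (S := S) i
      have h2 : ¬ lev n r S i ≤ r := fun hle => hiD (Dch_mono hchain hle (lev_spec i))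
      omega
    have hyi : ypt n r S q i = (q n : ℝ) + 1 := by
      rw [ypt, hlev, vlv, if_neg (by omega)]
    have hsplit : ∑ j ∈ T, ypt n r S q j
        = ypt n r S q i + ∑ j ∈ T.erase i, ypt n r S q j :=
      (Finset.add_sum_erase T _ hiT).symm
    have hrest : 0 ≤ ∑ j ∈ T.erase i, ypt n r S q j :=
      Finset.sum_nonneg fun j _ => ypt_nonneg hq hchain hne j
    have hqn : (q T.card : ℝ) ≤ (q n : ℝ) := by
      have : T.card ≤ n := by
        have := Finset.card_le_card (Finset.subset_univ T)
        simpa using this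
      exact_mod_cast q_mono hq this
    rw [fS, hsplit, hyi]
    linarith

include hq hchain hne in
lemma ypt_nonneg_fS (T : Finset (Fin n)) (hT : T.Nonempty) : 0 ≤ fS n q T (ypt n r S q) := by
  by_cases h : T ∈ Set.range S
  · obtain ⟨i, rfl⟩ := h
    rw [ypt_on_chain hq hchain hne]
  · exact (ypt_off_chain hq hchain hne T hT h).le

end PointFacts
end Strat

namespace Strat
section Topo
open Finset Filter

variable {n : ℕ} {q : ℕ → ℕ}

lemma fS_cont (T : Finset (Fin n)) : Continuous (fS n q T) :=
  continuous_const.add (continuous_finset_sum _ fun i _ => continuous_apply i)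

lemma fS_affine (T : Finset (Fin n)) {a b : ℝ} (h : a + b = 1) (x z : Fin n → ℝ) :
    fS n q T (a • x + b • z) = a * fS n q T x + b * fS n q T z := by
  simp only [fS, Pi.add_apply, Pi.smul_apply, smul_eq_mul, Finset.sum_add_distrib,
    ← Finset.mul_sum]
  linear_combination (q T.card : ℝ) * h

lemma isOpen_fspos (T : Finset (Fin n)) : IsOpen {y : Fin n → ℝ | 0 < fS n q T y} :=
  isOpen_Ioi.preimage (fS_cont T)

lemma isClosed_fsnonneg (T : Finset (Fin n)) : IsClosed {y : Fin n → ℝ | 0 ≤ fS n q T y} :=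
  isClosed_Ici.preimage (fS_cont T)

lemma isOpen_Omega : IsOpen (Omega n q) := by
  have : Omega n q = ⋂ T : Finset (Fin n), {y | T.Nonempty → 0 < fS n q T y} := by
    ext y; simp [Omega, Set.mem_iInter]
  rw [this]
  apply isOpen_iInter_of_finite
  intro T
  by_cases h : T.Nonempty
  · have : {y : Fin n → ℝ | T.Nonempty → 0 < fS n q T y} = {y | 0 < fS n q T y} := by
      ext y; simp [h]
    rw [this]; exact isOpen_fspos T
  · have : {y : Fin n → ℝ | T.Nonempty → 0 < fS n q T y} = Set.univ := by
      ext y; simp [h]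
    rw [this]; exact isOpen_univ

/-- the closed region -/
def Kset (n : ℕ) (q : ℕ → ℕ) : Set (Fin n → ℝ) :=
  {y | ∀ T : Finset (Fin n), T.Nonempty → 0 ≤ fS n q T y}

lemma isClosed_Kset : IsClosed (Kset n q) := by
  have : Kset n q = ⋂ T : Finset (Fin n), {y | T.Nonempty → 0 ≤ fS n q T y} := by
    ext y; simp [Kset, Set.mem_iInter]
  rw [this]
  apply isClosed_iInter
  intro T
  by_cases h : T.Nonempty
  · have : {y : Fin n → ℝ | T.Nonempty → 0 ≤ fS n q T y} = {y | 0 ≤ fS n q T y} := by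
      ext y; simp [h]
    rw [this]; exact isClosed_fsnonneg T
  · have : {y : Fin n → ℝ | T.Nonempty → 0 ≤ fS n q T y} = Set.univ := by
      ext y; simp [h]
    rw [this]; exact isClosed_univ

lemma closure_Omega_subset_Kset : closure (Omega n q) ⊆ Kset n q :=
  closure_minimal (fun y hy T hT => (hy T hT).le) isClosed_Kset

lemma zpt_mem_Omega (hq : qCond q) : (fun _ : Fin n => (q n : ℝ) + 1) ∈ Omega n q := by
  intro T hT
  rw [fS, Finset.sum_const, nsmul_eq_mul]
  have h1 : 1 ≤ T.card := Finset.card_pos.mpr hT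
  have h2 : (q T.card : ℝ) ≤ (q n : ℝ) := by
    exact_mod_cast q_mono hq (by simpa using Finset.card_le_card (Finset.subset_univ T))
  have h3 : ((q n : ℝ) + 1) ≤ (T.card : ℝ) * ((q n : ℝ) + 1) := by
    have : (1 : ℝ) ≤ (T.card : ℝ) := by exact_mod_cast h1
    nlinarith [this]
  linarith

lemma Kset_subset_closure (hq : qCond q) : Kset n q ⊆ closure (Omega n q) := by
  intro y hy
  set z : Fin n → ℝ := fun _ => (q n : ℝ) + 1 with hz
  have hzo : z ∈ Omega n q := zpt_mem_Omega hq
  have htend : Tendsto (fun m : ℕ => (1 - 1 / (m + 1 : ℝ)) • y + (1 / (m + 1 : ℝ)) • z)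
      atTop (nhds y) := by
    have h1 : Tendsto (fun m : ℕ => 1 / (m + 1 : ℝ)) atTop (nhds 0) :=
      tendsto_one_div_add_atTop_nhds_zero_nat
    have h2 : Tendsto (fun m : ℕ => (1 - 1 / (m + 1 : ℝ))) atTop (nhds 1) := by
      simpa using tendsto_const_nhds.sub h1
    have := (h2.smul_const y).add (h1.smul_const z)
    simpa using this
  apply mem_closure_of_tendsto htend
  filter_upwards with m
  intro T hT
  have hε : 0 < 1 / (m + 1 : ℝ) := by positivity
  have hε1 : 1 / (m + 1 : ℝ) ≤ 1 := by
    rw [div_le_one (by positivity)]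
    simp
  rw [fS_affine T (by ring : (1 - 1 / (m + 1 : ℝ)) + 1 / (m + 1 : ℝ) = 1)]
  have hy' := hy T hT
  have hz' := hzo T hT
  nlinarith [mul_nonneg (by linarith : (0:ℝ) ≤ 1 - 1 / (m + 1 : ℝ)) hy', mul_pos hε hz']

end Topo
end Strat

namespace Strat
section Strata
open Finset

variable {n r : ℕ} {S : Fin r → Finset (Fin n)} {q : ℕ → ℕ}

/-- the open part of the stratum -/
def Wset (n r : ℕ) (q : ℕ → ℕ) (S : Fin r → Finset (Fin n)) : Set (Fin n → ℝ) :=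
  {y | ∀ T : Finset (Fin n), T.Nonempty → T ∉ Set.range S → 0 < fS n q T y}

lemma isOpen_Wset : IsOpen (Wset n r q S) := by
  have : Wset n r q S
      = ⋂ T : Finset (Fin n), {y | T.Nonempty → T ∉ Set.range S → 0 < fS n q T y} := by
    ext y; simp [Wset, Set.mem_iInter]
  rw [this]
  apply isOpen_iInter_of_finite
  intro T
  by_cases h : T.Nonempty ∧ T ∉ Set.range S
  · have : {y : Fin n → ℝ | T.Nonempty → T ∉ Set.range S → 0 < fS n q T y}
        = {y | 0 < fS n q T y} := by
      ext y; simp [h.1, h.2]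
    rw [this]; exact isOpen_fspos T
  · have : {y : Fin n → ℝ | T.Nonempty → T ∉ Set.range S → 0 < fS n q T y} = Set.univ := by
      ext y
      simp only [Set.mem_setOf_eq, Set.mem_univ, iff_true]
      intro h1 h2
      exact absurd ⟨h1, h2⟩ h
    rw [this]; exact isOpen_univ

lemma convex_Wset : Convex ℝ (Wset n r q S) := by
  intro x hx z hz a b ha hb hab
  intro T hTn hTr
  rw [fS_affine T hab]
  have hx' := hx T hTn hTr
  have hz' := hz T hTn hTr
  rcases eq_or_lt_of_le ha with h | h
  · have hb1 : b = 1 := by linarith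
    rw [← h, hb1]; simpa using hz'
  · nlinarith [mul_pos h hx', mul_nonneg hb hz'.le]

lemma convex_Lhyp (T : Finset (Fin n)) : Convex ℝ (Lhyp n q T) := by
  intro x hx z hz a b ha hb hab
  have hx' : fS n q T x = 0 := hx
  have hz' : fS n q T z = 0 := hz
  show fS n q T _ = 0
  rw [fS_affine T hab, hx', hz']
  ring

variable (hq : qCond q) (hr : 1 ≤ r) (hchain : ∀ i j : Fin r, i < j → S i ⊂ S j)
  (hne : ∀ i, (S i).Nonempty)

include hq hr hne in
lemma stratum_eq :
    frontier (Omega n q) ∩ (⋂ i, Lhyp n q (S i)) ∩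
        (⋃ T ∈ {T : Finset (Fin n) | T.Nonempty ∧ T ∉ Set.range S}, Lhyp n q T)ᶜ
      = Wset n r q S ∩ ⋂ i, Lhyp n q (S i) := by
  ext y
  constructor
  · rintro ⟨⟨hfr, hX⟩, hU⟩
    refine ⟨?_, hX⟩
    intro T hTn hTr
    have hK : y ∈ Kset n q := closure_Omega_subset_Kset (frontier_subset_closure hfr)
    have h0 : fS n q T y ≠ 0 := by
      intro h
      exact hU (Set.mem_biUnion (show T ∈ {T : Finset (Fin n) | T.Nonempty ∧ T ∉ Set.range S}
        from ⟨hTn, hTr⟩) h)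
    exact lt_of_le_of_ne (hK T hTn) (Ne.symm h0)
  · rintro ⟨hW, hX⟩
    have hXi : ∀ i : Fin r, fS n q (S i) y = 0 := fun i => Set.mem_iInter.mp hX i
    have hK : y ∈ Kset n q := by
      intro T hTn
      by_cases h : T ∈ Set.range S
      · obtain ⟨i, rfl⟩ := h
        rw [hXi i]
      · exact (hW T hTn h).le
    refine ⟨⟨?_, hX⟩, ?_⟩
    · rw [isOpen_Omega.frontier_eq]
      refine ⟨Kset_subset_closure hq hK, ?_⟩
      intro hO
      have h1 := hO (S ⟨0, hr⟩) (hne _)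
      have h0 := hXi ⟨0, hr⟩
      linarith
    · intro hmem
      rw [Set.mem_iUnion₂] at hmem
      obtain ⟨T, hT, hL⟩ := hmem
      have hL' : fS n q T y = 0 := hL
      exact absurd hL' (ne_of_gt (hW T hT.1 hT.2))

end Strata
end Strat

namespace Strat
section Rank
open Finset

variable {n r : ℕ} {S : Fin r → Finset (Fin n)}
variable (hn : 1 ≤ n) (hchain : ∀ i j : Fin r, i < j → S i ⊂ S j)
  (hne : ∀ i, (S i).Nonempty)

/-- choose an element in each successive difference -/
noncomputable def tf (hn : 1 ≤ n) (hchain : ∀ i j : Fin r, i < j → S i ⊂ S j)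
    (hne : ∀ i, (S i).Nonempty) (k : ℕ) : Fin n :=
  if h : k < r then
    (Finset.exists_of_ssubset (Dch_ssub hchain hne (Nat.lt_succ_self k) h)).choose
  else ⟨0, hn⟩

lemma tf_mem {k : ℕ} (h : k < r) :
    tf hn hchain hne k ∈ Dch n r S (k + 1) ∧ tf hn hchain hne k ∉ Dch n r S k := by
  rw [tf, dif_pos h]
  exact (Finset.exists_of_ssubset (Dch_ssub hchain hne (Nat.lt_succ_self k) h)).choose_spec

lemma tf_in_S {k : ℕ} (h : k < r) (l : Fin r) :
    tf hn hchain hne k ∈ S l ↔ k ≤ (l : ℕ) := by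
  have hD : S l = Dch n r S ((l : ℕ) + 1) := (Dch_succ l.isLt).symm
  rw [hD]
  constructor
  · intro hmem
    by_contra hc
    have hsub : Dch n r S ((l : ℕ) + 1) ⊆ Dch n r S k := Dch_mono hchain (by omega)
    exact (tf_mem hn hchain hne h).2 (hsub hmem)
  · intro hle
    exact Dch_mono hchain (by omega) (tf_mem hn hchain hne h).1

/-- witness vectors -/
noncomputable def gv (hn : 1 ≤ n) (hchain : ∀ i j : Fin r, i < j → S i ⊂ S j)
    (hne : ∀ i, (S i).Nonempty) (k : ℕ) : Fin n → ℝ :=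
  if k < r then (Pi.single (tf hn hchain hne k) (1:ℝ) : Fin n → ℝ) else 0

lemma Phi_g (k : ℕ) :
    LinearMap.pi (fun i : Fin r => ∑ j ∈ S i, (LinearMap.proj j : (Fin n → ℝ) →ₗ[ℝ] ℝ))
        (gv hn hchain hne k)
      = fun l : Fin r => if k ≤ (l : ℕ) then (1:ℝ) else 0 := by
  funext l
  rw [LinearMap.pi_apply]
  by_cases h : k < r
  · rw [gv, if_pos h]
    have : (∑ j ∈ S l, (LinearMap.proj j : (Fin n → ℝ) →ₗ[ℝ] ℝ))
        (Pi.single (tf hn hchain hne k) (1:ℝ) : Fin n → ℝ)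
        = ∑ j ∈ S l, (Pi.single (tf hn hchain hne k) (1:ℝ) : Fin n → ℝ) j := by
      simp [LinearMap.sum_apply]
    rw [this]
    simp only [Pi.single_apply]
    rw [Finset.sum_ite_eq' (S l) (tf hn hchain hne k) (fun _ => (1:ℝ))]
    by_cases hmem : tf hn hchain hne k ∈ S l
    · rw [if_pos hmem, if_pos ((tf_in_S hn hchain hne h l).mp hmem)]
    · rw [if_neg hmem, if_neg (fun hc => hmem ((tf_in_S hn hchain hne h l).mpr hc))]
  · have h2 : ¬ k ≤ (l : ℕ) := by omega
    rw [gv, if_neg h, if_neg h2]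
    simp

include hn hchain hne in
lemma single_mem_range (l : Fin r) :
    (Pi.single l (1:ℝ) : Fin r → ℝ) ∈ LinearMap.range
      (LinearMap.pi (fun i : Fin r => ∑ j ∈ S i, (LinearMap.proj j : (Fin n → ℝ) →ₗ[ℝ] ℝ))) := by
  refine ⟨gv hn hchain hne (l : ℕ) - gv hn hchain hne ((l : ℕ) + 1), ?_⟩
  rw [map_sub, Phi_g hn hchain hne, Phi_g hn hchain hne]
  funext l'
  simp only [Pi.sub_apply, Pi.single_apply, Fin.ext_iff]
  split_ifs <;> first | (exfalso; omega) | norm_num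

include hn hchain hne in
lemma Phi_surj :
    LinearMap.range
      (LinearMap.pi (fun i : Fin r => ∑ j ∈ S i, (LinearMap.proj j : (Fin n → ℝ) →ₗ[ℝ] ℝ))) = ⊤ := by
  rw [eq_top_iff]
  rintro w -
  have hw : w = ∑ l : Fin r, w l • (Pi.single l (1:ℝ) : Fin r → ℝ) := by
    funext l'
    simp [Finset.sum_apply, Pi.single_apply]
  rw [hw]
  exact Submodule.sum_mem _ fun l _ =>
    Submodule.smul_mem _ _ (single_mem_range hn hchain hne l)

include hchain hne in
lemma r_le_n : r ≤ n := by
  have haux : ∀ k, k ≤ r → k ≤ cD n r S k := by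
    intro k
    induction k with
    | zero => intro _; omega
    | succ k ih =>
      intro hk
      exact Nat.succ_le_of_lt (lt_of_le_of_lt (ih (by omega))
        (cD_lt hchain hne (Nat.lt_succ_self k) hk))
  have h1 := haux r (le_refl r)
  have h2 : cD n r S r ≤ n := by
    have := Finset.card_le_univ (Dch n r S r)
    simpa [cD] using this
  omega

include hn hchain hne in
lemma rank_result :
    Module.finrank ℝ
      ↥(⨅ i : Fin r, LinearMap.ker (∑ j ∈ S i, (LinearMap.proj j : (Fin n → ℝ) →ₗ[ℝ] ℝ)))
      = n - r := by
  have hker : (⨅ i : Fin r, LinearMap.ker (∑ j ∈ S i, (LinearMap.proj j : (Fin n → ℝ) →ₗ[ℝ] ℝ)))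
      = LinearMap.ker (LinearMap.pi
          (fun i : Fin r => ∑ j ∈ S i, (LinearMap.proj j : (Fin n → ℝ) →ₗ[ℝ] ℝ))) :=
    (LinearMap.ker_pi _).symm
  rw [hker]
  have h2 := LinearMap.finrank_range_add_finrank_ker (LinearMap.pi
    (fun i : Fin r => ∑ j ∈ S i, (LinearMap.proj j : (Fin n → ℝ) →ₗ[ℝ] ℝ)))
  rw [Phi_surj hn hchain hne, finrank_top] at h2
  have h3 : Module.finrank ℝ (Fin r → ℝ) = r := by simp [Module.finrank_pi]
  have h4 : Module.finrank ℝ (Fin n → ℝ) = n := by simp [Module.finrank_pi]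
  rw [h3, h4] at h2
  have h5 := r_le_n hchain hne
  omega

end Rank
end Strat

theorem boundary_stratum_nonempty_convex_relatively_open
    (n : ℕ) (hn : 1 ≤ n) (q : ℕ → ℕ) (hq : qCond q)
    (r : ℕ) (hr : 1 ≤ r) (S : Fin r → Finset (Fin n))
    (hne : ∀ i, (S i).Nonempty)
    (hchain : ∀ i j : Fin r, i < j → S i ⊂ S j) :
    (frontier (Omega n q) ∩ (⋂ i, Lhyp n q (S i)) ∩
        (⋃ T ∈ {T : Finset (Fin n) | T.Nonempty ∧ T ∉ Set.range S}, Lhyp n q T)ᶜ).Nonempty ∧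
    Convex ℝ (frontier (Omega n q) ∩ (⋂ i, Lhyp n q (S i)) ∩
        (⋃ T ∈ {T : Finset (Fin n) | T.Nonempty ∧ T ∉ Set.range S}, Lhyp n q T)ᶜ) ∧
    (∃ U : Set (Fin n → ℝ), IsOpen U ∧
      frontier (Omega n q) ∩ (⋂ i, Lhyp n q (S i)) ∩
        (⋃ T ∈ {T : Finset (Fin n) | T.Nonempty ∧ T ∉ Set.range S}, Lhyp n q T)ᶜ =
      U ∩ (⋂ i, Lhyp n q (S i))) ∧
    Module.finrank ℝ
      ↥(⨅ i : Fin r, LinearMap.ker (∑ j ∈ S i, (LinearMap.proj j : (Fin n → ℝ) →ₗ[ℝ] ℝ))) =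
      n - r := by
  have hstr := Strat.stratum_eq (S := S) hq hr hne
  refine ⟨?_, ?_, ?_, ?_⟩
  · rw [hstr]
    refine ⟨Strat.ypt n r S q, ?_, ?_⟩
    · intro T hTn hTr
      exact Strat.ypt_off_chain hq hchain hne T hTn hTr
    · exact Set.mem_iInter.mpr fun i =>
        show fS n q (S i) _ = 0 from Strat.ypt_on_chain hq hchain hne i
  · rw [hstr]
    exact Strat.convex_Wset.inter (convex_iInter fun i => Strat.convex_Lhyp (S i))
  · exact ⟨Strat.Wset n r q S, Strat.isOpen_Wset, hstr⟩
  · exact Strat.rank_result hn hchain hne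
end

section
/- For all y ∈ ℝ^n, the Jacobian determinant of the map F satisfies det(∂F/∂y)(y) = (∏_{∅≠S⊆{1,…,n}} f_S(y)^{|S|−1}) · R(y), where R(y) = Σ_{{S_1,…,S_n}} det(M^{1_{S_1},…,1_{S_n}})² · ∏_{∅≠P∉{S_1,…,S_n}} f_P(y), the sum being over all collections of n distinct nonempty subsets S_1,…,S_n of {1,…,n} and M^{1_{S_1},…,1_{S_n}} denoting the n×n matrix whose columns are the indicator vectors 1_{S_1},…,1_{S_n}. -/
/-- The map `F : ℝ^n → ℝ^n`, `F_i = ∏_{S ∋ i} f_S`. -/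
def Fmap (n : ℕ) (q : ℕ → ℕ) (y : Fin n → ℝ) : Fin n → ℝ := fun i =>
  ∏ S ∈ Finset.univ.filter (fun S : Finset (Fin n) => i ∈ S), fS n q S y

/-- `det(M^{1_{S_1},…,1_{S_n}})²` : the square of the determinant of the matrix whose columns
are the indicator vectors of the members of the collection `𝒮` of `n` distinct subsets
of `{1,…,n}` (in any order; the square is order-independent). -/
noncomputable def detSqCols (n : ℕ) (𝒮 : Finset (Finset (Fin n))) : ℝ :=
  if h : 𝒮.card = n then
    (Matrix.det (Matrix.of fun i j : Fin n =>
      if i ∈ ((𝒮.equivFin.symm (Fin.cast h.symm j)) : Finset (Fin n)) then (1:ℝ) else 0))^2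
  else 0

/-- The polynomial `R(y) = Σ_{{S_1,…,S_n}} det(M^{1_{S_1},…,1_{S_n}})² ∏_{∅≠P∉{S_1,…,S_n}} f_P(y)`,
the sum being over all collections of `n` distinct nonempty subsets of `{1,…,n}`. -/
noncomputable def Rpoly (n : ℕ) (q : ℕ → ℕ) (y : Fin n → ℝ) : ℝ :=
  ∑ 𝒮 ∈ Finset.univ.filter (fun 𝒮 : Finset (Finset (Fin n)) => 𝒮.card = n ∧ ∅ ∉ 𝒮),
    detSqCols n 𝒮 *
      ∏ P ∈ Finset.univ.filter (fun P : Finset (Fin n) => P.Nonempty ∧ P ∉ 𝒮), fS n q P y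

open Finset

namespace Jac
variable {n : ℕ} (q : ℕ → ℕ) (y : Fin n → ℝ)

noncomputable def L (S : Finset (Fin n)) : (Fin n → ℝ) →L[ℝ] ℝ :=
  ∑ j ∈ S, ContinuousLinearMap.proj j

lemma L_apply (S : Finset (Fin n)) (v : Fin n → ℝ) : L S v = ∑ j ∈ S, v j := by
  simp [L]

lemma hasFDerivAt_fS (S : Finset (Fin n)) :
    HasFDerivAt (fS n q S) (L S) y := by
  have h : HasFDerivAt (fun y : Fin n → ℝ => ∑ i ∈ S, y i) (L S) y :=
    HasFDerivAt.fun_sum fun i _ => hasFDerivAt_apply i y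
  exact h.const_add (-(q S.card : ℝ))

def A (i : Fin n) : Finset (Finset (Fin n)) := univ.filter (fun S => i ∈ S)

noncomputable def dcoef (i : Fin n) (S : Finset (Fin n)) : ℝ :=
  ∏ T ∈ (A i).erase S, fS n q T y

lemma hasFDerivAt_Fmap :
    HasFDerivAt (Fmap n q)
      (ContinuousLinearMap.pi fun i => ∑ S ∈ A i, dcoef q y i S • L S) y := by
  apply hasFDerivAt_pi.2
  intro i
  exact HasFDerivAt.finset_prod (fun S _ => hasFDerivAt_fS q y S)

noncomputable def Jmat : Matrix (Fin n) (Fin n) ℝ :=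
  Matrix.of fun i j => ∑ S ∈ A i, dcoef q y i S * (if j ∈ S then (1:ℝ) else 0)

lemma det_fderiv_eq : LinearMap.det ((fderiv ℝ (Fmap n q) y).toLinearMap) = (Jmat q y).det := by
  rw [(hasFDerivAt_Fmap q y).fderiv, ← LinearMap.det_toMatrix']
  congr 1
  ext i j
  simp [LinearMap.toMatrix'_apply, Jmat, L_apply, mul_comm]

end Jac

namespace Jac
variable {n : ℕ} (q : ℕ → ℕ) (y : Fin n → ℝ)

lemma det_Jmat_expand :
    (Jmat q y).det = ∑ g ∈ Fintype.piFinset (fun i : Fin n => A i),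
      (∏ i, dcoef q y i (g i)) *
        (Matrix.of fun i j => if j ∈ g i then (1:ℝ) else 0).det := by
  have h1 : (Jmat q y) = fun i => ∑ S ∈ A i,
      dcoef q y i S • (fun j => if j ∈ S then (1:ℝ) else 0) := by
    ext i j
    simp [Jmat, Finset.sum_apply]
  have h2 : (Jmat q y).det
      = (Matrix.detRowAlternating (R := ℝ) (n := Fin n)).toMultilinearMap (Jmat q y) := rfl
  rw [h2, h1, MultilinearMap.map_sum_finset]
  refine Finset.sum_congr rfl fun g _ => ?_
  rw [MultilinearMap.map_smul_univ]
  simp only [smul_eq_mul]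
  rfl

end Jac

namespace Jac
variable {n : ℕ} (q : ℕ → ℕ) (y : Fin n → ℝ)

lemma prod_dcoef (g : Fin n → Finset (Fin n)) (hg1 : ∀ i, i ∈ g i)
    (hginj : Function.Injective g) :
    ∏ i, dcoef q y i (g i) =
      (∏ S ∈ univ.filter (fun S : Finset (Fin n) => S.Nonempty), fS n q S y ^ (S.card - 1)) *
      ∏ P ∈ univ.filter (fun P : Finset (Fin n) => P.Nonempty ∧ P ∉ Finset.image g univ),
        fS n q P y := by
  classical
  set 𝒮 := Finset.image g univ with h𝒮
  have hstep : ∀ i, dcoef q y i (g i)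
      = ∏ T ∈ univ.filter (fun T : Finset (Fin n) => T ≠ g i ∧ i ∈ T), fS n q T y := by
    intro i
    unfold dcoef
    congr 1
    ext T
    simp [A, Finset.mem_erase, and_comm]
  calc ∏ i, dcoef q y i (g i)
      = ∏ i, ∏ T ∈ univ.filter (fun T : Finset (Fin n) => T ≠ g i ∧ i ∈ T), fS n q T y := by
        exact Finset.prod_congr rfl fun i _ => hstep i
    _ = ∏ i, ∏ T : Finset (Fin n),
          (if T ≠ g i ∧ i ∈ T then fS n q T y else 1) := by
        refine Finset.prod_congr rfl fun i _ => ?_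
        rw [Finset.prod_filter]
    _ = ∏ T : Finset (Fin n), ∏ i, (if T ≠ g i ∧ i ∈ T then fS n q T y else 1) :=
        Finset.prod_comm
    _ = ∏ T : Finset (Fin n),
          fS n q T y ^ (univ.filter (fun i => T ≠ g i ∧ i ∈ T)).card := by
        refine Finset.prod_congr rfl fun T _ => ?_
        rw [Finset.prod_ite, Finset.prod_const, Finset.prod_const_one, mul_one]
    _ = ∏ T : Finset (Fin n), fS n q T y ^ (if T ∈ 𝒮 then T.card - 1 else T.card) := by
        refine Finset.prod_congr rfl fun T _ => ?_
        congr 1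
        have hfe : univ.filter (fun i => T ≠ g i ∧ i ∈ T) = T.filter (fun i => T ≠ g i) := by
          ext i; simp [and_comm]
        rw [hfe]
        by_cases hT : T ∈ 𝒮
        · obtain ⟨i₀, -, hi₀⟩ := Finset.mem_image.1 hT
          have hi₀T : i₀ ∈ T := hi₀ ▸ hg1 i₀
          have : T.filter (fun i => T ≠ g i) = T.erase i₀ := by
            ext i
            simp only [Finset.mem_filter, Finset.mem_erase]
            constructor
            · rintro ⟨hiT, hne⟩
              refine ⟨fun h => hne ?_, hiT⟩
              rw [h, hi₀]
            · rintro ⟨hne, hiT⟩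
              refine ⟨hiT, fun h => hne (hginj ?_)⟩
              rw [hi₀, ← h]
          rw [this, if_pos hT, Finset.card_erase_of_mem hi₀T]
        · rw [if_neg hT]
          have : T.filter (fun i => T ≠ g i) = T := by
            refine Finset.filter_true_of_mem fun i hi => fun h => hT ?_
            rw [h𝒮, h]
            exact Finset.mem_image_of_mem g (Finset.mem_univ i)
          rw [this]
    _ = (∏ S ∈ univ.filter (fun S : Finset (Fin n) => S.Nonempty),
            fS n q S y ^ (S.card - 1)) *
          ∏ P ∈ univ.filter (fun P : Finset (Fin n) => P.Nonempty ∧ P ∉ 𝒮), fS n q P y := by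
        rw [Finset.prod_filter, Finset.prod_filter, ← Finset.prod_mul_distrib]
        refine Finset.prod_congr rfl fun T _ => ?_
        have hempty : ∅ ∉ 𝒮 := by
          intro h
          obtain ⟨i, -, hi⟩ := Finset.mem_image.1 h
          exact absurd (hi ▸ hg1 i) (Finset.notMem_empty i)
        by_cases hTne : T.Nonempty
        · by_cases hT : T ∈ 𝒮
          · rw [if_pos hT, if_pos hTne, if_neg (by simp [hT]), mul_one]
          · rw [if_neg hT, if_pos hTne, if_pos ⟨hTne, hT⟩, ← pow_succ,
              Nat.sub_add_cancel (Finset.card_pos.2 hTne)]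
        · have hT0 : T = ∅ := Finset.not_nonempty_iff_eq_empty.1 hTne
          subst hT0
          rw [if_neg hempty, if_neg hTne, if_neg (by simp [hTne]), Finset.card_empty,
            pow_zero, mul_one]

end Jac

namespace Jac
variable {n : ℕ} (q : ℕ → ℕ) (y : Fin n → ℝ)

variable (𝒮 : Finset (Finset (Fin n)))

/-- An enumeration of a collection `𝒮` of `n` subsets. -/
noncomputable def Ecol (h : 𝒮.card = n) : Fin n → Finset (Fin n) :=
  fun j => ((𝒮.equivFin.symm (Fin.cast h.symm j)) : Finset (Fin n))

lemma Ecol_inj (h : 𝒮.card = n) : Function.Injective (Ecol 𝒮 h) := by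
  intro a b hab
  have := Subtype.coe_injective hab
  have := (𝒮.equivFin.symm.injective this)
  exact Fin.cast_injective _ this

lemma Ecol_mem (h : 𝒮.card = n) (j : Fin n) : Ecol 𝒮 h j ∈ 𝒮 := Subtype.coe_prop _

lemma image_Ecol (h : 𝒮.card = n) : Finset.image (Ecol 𝒮 h) univ = 𝒮 := by
  refine Finset.eq_of_subset_of_card_le ?_ ?_
  · intro T hT
    obtain ⟨j, -, rfl⟩ := Finset.mem_image.1 hT
    exact Ecol_mem 𝒮 h j
  · rw [Finset.card_image_of_injective _ (Ecol_inj 𝒮 h), Finset.card_univ,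
      Fintype.card_fin, h]

lemma fiber_eq (h : 𝒮.card = n) :
    (Fintype.piFinset (fun i : Fin n => A i)).filter
        (fun g => Finset.image g univ = 𝒮)
      = (univ.filter (fun σ : Equiv.Perm (Fin n) => ∀ i, i ∈ Ecol 𝒮 h (σ i))).image
          (fun σ i => Ecol 𝒮 h (σ i)) := by
  ext g
  simp only [Finset.mem_filter, Finset.mem_image, Fintype.mem_piFinset, Finset.mem_univ,
    true_and, A]
  constructor
  · rintro ⟨hmem, himg⟩
    have hgi : ∀ i, i ∈ g i := fun i => by
      have := hmem i; simpa [A] using this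
    have hginj : Function.Injective g := by
      have hcard : (Finset.image g univ).card = (univ : Finset (Fin n)).card := by
        rw [himg, h, Finset.card_univ, Fintype.card_fin]
      have := Finset.card_image_iff.1 hcard
      rw [Finset.coe_univ] at this
      exact Set.injOn_univ.1 this
    have pf : ∀ i, g i ∈ 𝒮 := fun i =>
      himg ▸ Finset.mem_image_of_mem g (Finset.mem_univ i)
    set τ : Fin n → Fin n := fun i => Fin.cast h (𝒮.equivFin ⟨g i, pf i⟩) with hτ
    have hτinj : Function.Injective τ := by
      intro a b hab
      have h2 := 𝒮.equivFin.injective (Fin.cast_injective h hab)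
      exact hginj (congrArg Subtype.val h2)
    have hτbij : Function.Bijective τ := Finite.injective_iff_bijective.1 hτinj
    refine ⟨Equiv.ofBijective τ hτbij, fun i => ?_, ?_⟩
    · have : Ecol 𝒮 h (τ i) = g i := by
        simp [Ecol, hτ]
      rw [Equiv.ofBijective_apply, this]
      exact hgi i
    · funext i
      rw [Equiv.ofBijective_apply]
      simp [Ecol, hτ]
  · rintro ⟨σ, hσ, rfl⟩
    refine ⟨fun i => by simpa [A] using hσ i, ?_⟩
    have : Finset.image (fun i => Ecol 𝒮 h (σ i)) univ
        = Finset.image (Ecol 𝒮 h) (Finset.image σ univ) := by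
      rw [Finset.image_image]; rfl
    rw [this, Finset.image_univ_equiv, image_Ecol]

end Jac

namespace Jac
variable {n : ℕ} (q : ℕ → ℕ) (y : Fin n → ℝ) (𝒮 : Finset (Finset (Fin n)))

/-- Matrix whose *rows* are indicators of the members of 𝒮. -/
noncomputable def Ct (h : 𝒮.card = n) : Matrix (Fin n) (Fin n) ℝ :=
  Matrix.of fun i j => if j ∈ Ecol 𝒮 h i then (1:ℝ) else 0

lemma sum_sign (h : 𝒮.card = n) :
    ∑ σ ∈ univ.filter (fun σ : Equiv.Perm (Fin n) => ∀ i, i ∈ Ecol 𝒮 h (σ i)),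
      ((Equiv.Perm.sign σ : ℤ) : ℝ) = (Ct 𝒮 h).det := by
  rw [Matrix.det_apply, Finset.sum_filter]
  refine Finset.sum_congr rfl fun σ _ => ?_
  have : ∏ i, (Ct 𝒮 h) (σ i) i = if (∀ i, i ∈ Ecol 𝒮 h (σ i)) then (1:ℝ) else 0 := by
    by_cases hp : ∀ i, i ∈ Ecol 𝒮 h (σ i)
    · rw [if_pos hp]
      exact Finset.prod_eq_one fun i _ => by simp [Ct, hp i]
    · rw [if_neg hp]
      push_neg at hp
      obtain ⟨i, hi⟩ := hp
      exact Finset.prod_eq_zero (Finset.mem_univ i) (by simp [Ct, hi])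
    
  rw [this]
  by_cases hp : ∀ i, i ∈ Ecol 𝒮 h (σ i) <;>
    simp [hp, Units.smul_def]

lemma det_row_perm (h : 𝒮.card = n) (σ : Equiv.Perm (Fin n)) :
    (Matrix.of fun i j => if j ∈ Ecol 𝒮 h (σ i) then (1:ℝ) else 0).det
      = ((Equiv.Perm.sign σ : ℤ) : ℝ) * (Ct 𝒮 h).det := by
  have : (Matrix.of fun i j => if j ∈ Ecol 𝒮 h (σ i) then (1:ℝ) else 0)
      = (Ct 𝒮 h).submatrix σ id := rfl
  rw [this, Matrix.det_permute]

end Jac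

namespace Jac
variable {n : ℕ} (q : ℕ → ℕ) (y : Fin n → ℝ) (𝒮 : Finset (Finset (Fin n)))

lemma detSq_eq (h : 𝒮.card = n) : detSqCols n 𝒮 = ((Ct 𝒮 h).det)^2 := by
  rw [detSqCols, dif_pos h, ← Matrix.det_transpose (Ct 𝒮 h)]
  rfl

lemma inner_sum (h : 𝒮.card = n) :
    (∑ g ∈ (Fintype.piFinset fun i : Fin n => A i).filter
        (fun g => Finset.image g univ = 𝒮),
      (∏ i, dcoef q y i (g i)) * (Matrix.of fun i j => if j ∈ g i then (1:ℝ) else 0).det)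
    = (∏ S ∈ univ.filter (fun S : Finset (Fin n) => S.Nonempty), fS n q S y ^ (S.card - 1)) *
      (detSqCols n 𝒮 *
        ∏ P ∈ univ.filter (fun P : Finset (Fin n) => P.Nonempty ∧ P ∉ 𝒮), fS n q P y) := by
  classical
  rw [fiber_eq 𝒮 h, Finset.sum_image (by
    intro σ _ σ' _ hee
    exact Equiv.ext fun i => Ecol_inj 𝒮 h (congrFun hee i))]
  have himg : ∀ σ : Equiv.Perm (Fin n),
      Finset.image (fun i => Ecol 𝒮 h (σ i)) univ = 𝒮 := by
    intro σ
    have : Finset.image (fun i => Ecol 𝒮 h (σ i)) univ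
        = Finset.image (Ecol 𝒮 h) (Finset.image σ univ) := by
      rw [Finset.image_image]; rfl
    rw [this, Finset.image_univ_equiv, image_Ecol]
  have hterm : ∀ σ ∈ univ.filter (fun σ : Equiv.Perm (Fin n) => ∀ i, i ∈ Ecol 𝒮 h (σ i)),
      (∏ i, dcoef q y i (Ecol 𝒮 h (σ i))) *
          (Matrix.of fun i j => if j ∈ Ecol 𝒮 h (σ i) then (1:ℝ) else 0).det
        = ((Equiv.Perm.sign σ : ℤ) : ℝ) *
          ((∏ S ∈ univ.filter (fun S : Finset (Fin n) => S.Nonempty),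
              fS n q S y ^ (S.card - 1)) *
            ((Ct 𝒮 h).det *
              ∏ P ∈ univ.filter (fun P : Finset (Fin n) => P.Nonempty ∧ P ∉ 𝒮), fS n q P y)) := by
    intro σ hσ
    have hσ' : ∀ i, i ∈ Ecol 𝒮 h (σ i) := (Finset.mem_filter.1 hσ).2
    have hpd := prod_dcoef q y (fun i => Ecol 𝒮 h (σ i)) hσ'
      ((Ecol_inj 𝒮 h).comp σ.injective)
    rw [himg σ] at hpd
    rw [hpd, det_row_perm]
    ring
  rw [Finset.sum_congr rfl hterm, ← Finset.sum_mul, sum_sign, detSq_eq 𝒮 h]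
  ring

lemma fiber_zero (h : ¬(𝒮.card = n ∧ ∅ ∉ 𝒮)) :
    (∑ g ∈ (Fintype.piFinset fun i : Fin n => A i).filter
        (fun g => Finset.image g univ = 𝒮),
      (∏ i, dcoef q y i (g i)) * (Matrix.of fun i j => if j ∈ g i then (1:ℝ) else 0).det)
    = 0 := by
  classical
  refine Finset.sum_eq_zero fun g hg => ?_
  obtain ⟨hmem, himg⟩ := Finset.mem_filter.1 hg
  have hgi : ∀ i, i ∈ g i := fun i => by
    have := Fintype.mem_piFinset.1 hmem i; simpa [A] using this
  by_cases hc : 𝒮.card = n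
  · exfalso
    have h0 : ∅ ∈ 𝒮 := by
      by_contra h0
      exact h ⟨hc, h0⟩
    rw [← himg] at h0
    obtain ⟨i, -, hi⟩ := Finset.mem_image.1 h0
    exact absurd (hi ▸ hgi i) (Finset.notMem_empty i)
  · have hninj : ¬ Function.Injective g := by
      intro hinj
      apply hc
      rw [← himg, Finset.card_image_of_injective _ hinj, Finset.card_univ, Fintype.card_fin]
    rw [Function.not_injective_iff] at hninj
    obtain ⟨a, b, hab, hne⟩ := hninj
    have : (Matrix.of fun i j => if j ∈ g i then (1:ℝ) else 0).det = 0 := by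
      refine Matrix.det_zero_of_row_eq hne ?_
      funext j
      simp [hab]
    rw [this, mul_zero]

end Jac

theorem jacobian_determinant_factorization
    (n : ℕ) (hn : 1 ≤ n) (q : ℕ → ℕ) (hq : qCond q) (y : Fin n → ℝ) :
    LinearMap.det ((fderiv ℝ (Fmap n q) y).toLinearMap) =
      (∏ S ∈ Finset.univ.filter (fun S : Finset (Fin n) => S.Nonempty),
        fS n q S y ^ (S.card - 1)) * Rpoly n q y := by
  classical
  rw [Jac.det_fderiv_eq, Jac.det_Jmat_expand,
    ← Finset.sum_fiberwise_of_maps_to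
      (g := fun g : Fin n → Finset (Fin n) => Finset.image g Finset.univ)
      (t := Finset.univ) (fun g _ => Finset.mem_univ _),
    ← Finset.sum_filter_of_ne
      (p := fun 𝒮 : Finset (Finset (Fin n)) => 𝒮.card = n ∧ ∅ ∉ 𝒮)
      (fun 𝒮 _ hne => by
        by_contra hc
        exact hne (Jac.fiber_zero q y 𝒮 hc)),
    Rpoly, Finset.mul_sum]
  refine Finset.sum_congr rfl fun 𝒮 h𝒮 => ?_
  obtain ⟨hcard, h0⟩ := (Finset.mem_filter.1 h𝒮).2
  rw [Jac.inner_sum q y 𝒮 hcard]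
end

section
/- Let (c_S) be a family of real numbers indexed by the nonempty subsets S of {1,…,n}, and let A be the n×n matrix A = Σ_{∅≠S⊆{1,…,n}} c_S · 1_S 1_Sᵀ, where 1_S 1_Sᵀ is the matrix whose (i,j) entry is 1 if i,j ∈ S and 0 otherwise. Then det A = Σ_{{S_1,…,S_n}} (∏_{i=1}^n c_{S_i}) · det(M^{1_{S_1},…,1_{S_n}})², the sum being over all collections of n distinct nonempty subsets S_1,…,S_n of {1,…,n}, where M^{1_{S_1},…,1_{S_n}} is the n×n matrix whose columns are 1_{S_1},…,1_{S_n}. -/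
theorem det_sum_of_rank_one_indicator_matrices
    (n : ℕ) (hn : 1 ≤ n) (c : Finset (Fin n) → ℝ) :
    Matrix.det (Matrix.of fun i j : Fin n =>
        ∑ S ∈ Finset.univ.filter (fun S : Finset (Fin n) => S.Nonempty),
          (if i ∈ S ∧ j ∈ S then c S else 0)) =
      ∑ 𝒮 ∈ Finset.univ.filter (fun 𝒮 : Finset (Finset (Fin n)) => 𝒮.card = n ∧ ∅ ∉ 𝒮),
        (∏ S ∈ 𝒮, c S) * detSqCols n 𝒮 := by
  classical
  set P : Finset (Finset (Fin n)) := Finset.univ.filter (fun S : Finset (Fin n) => S.Nonempty)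
    with hP
  set B : (Fin n → Finset (Fin n)) → Matrix (Fin n) (Fin n) ℝ :=
    fun r => Matrix.of fun i j => if j ∈ r i then (1:ℝ) else 0 with hB
  set F : (Fin n → Finset (Fin n)) → ℝ :=
    fun r => (∏ i, (c (r i) * if i ∈ r i then (1:ℝ) else 0)) * (B r).det with hF
  -- Step 1: expand the determinant by multilinearity in the rows
  have step1 : Matrix.det (Matrix.of fun i j : Fin n =>
        ∑ S ∈ P, (if i ∈ S ∧ j ∈ S then c S else 0)) =
      ∑ r ∈ Fintype.piFinset (fun _ : Fin n => P), F r := by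
    have h1 : Matrix.det (Matrix.of fun i j : Fin n =>
          ∑ S ∈ P, (if i ∈ S ∧ j ∈ S then c S else 0)) =
        ∑ r ∈ Fintype.piFinset (fun _ : Fin n => P),
          Matrix.det (Matrix.of fun i j => if i ∈ r i ∧ j ∈ r i then c (r i) else 0) := by
      have := (Matrix.detRowAlternating (R := ℝ) (n := Fin n)).toMultilinearMap.map_sum_finset
        (g := fun i S => (fun j => if i ∈ S ∧ j ∈ S then c S else 0))
        (A := fun _ : Fin n => P)
      have he : (Matrix.of fun i j : Fin n => ∑ S ∈ P, (if i ∈ S ∧ j ∈ S then c S else 0)) =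
          (fun i => ∑ S ∈ P, (fun j => if i ∈ S ∧ j ∈ S then c S else 0)) := by
        ext i j; simp
      rw [Matrix.det, he]
      exact this
    rw [h1]
    refine Finset.sum_congr rfl fun r _ => ?_
    have h2 : (Matrix.of fun i j => if i ∈ r i ∧ j ∈ r i then c (r i) else 0) =
        Matrix.of fun i j =>
          (c (r i) * if i ∈ r i then (1:ℝ) else 0) * (if j ∈ r i then (1:ℝ) else 0) := by
      ext i j
      by_cases h3 : i ∈ r i <;> by_cases h4 : j ∈ r i <;> simp [h3, h4]
    rw [h2]
    exact Matrix.det_mul_column _ _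
  rw [step1]
  -- Step 2: terms for non-injective r vanish
  have step2 : ∑ r ∈ Fintype.piFinset (fun _ : Fin n => P), F r =
      ∑ r ∈ (Fintype.piFinset (fun _ : Fin n => P)).filter Function.Injective, F r := by
    symm
    apply Finset.sum_filter_of_ne
    intro r _ hne
    by_contra hinj
    apply hne
    rw [Function.not_injective_iff] at hinj
    obtain ⟨a, b, hab, hne'⟩ := hinj
    have : (B r).det = 0 := Matrix.det_zero_of_row_eq hne' (by ext j; simp [hB, hab])
    simp [hF, this]
  rw [step2]
  -- Step 3: group by image
  have hmaps : ∀ r ∈ (Fintype.piFinset (fun _ : Fin n => P)).filter Function.Injective,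
      Finset.image r Finset.univ ∈ Finset.univ.filter
        (fun 𝒮 : Finset (Finset (Fin n)) => 𝒮.card = n ∧ ∅ ∉ 𝒮) := by
    intro r hr
    rw [Finset.mem_filter] at hr ⊢
    obtain ⟨hrP, hrinj⟩ := hr
    rw [Fintype.mem_piFinset] at hrP
    refine ⟨Finset.mem_univ _, ?_, ?_⟩
    · rw [Finset.card_image_of_injective _ hrinj, Finset.card_univ, Fintype.card_fin]
    · intro hcon
      rw [Finset.mem_image] at hcon
      obtain ⟨i, -, hi⟩ := hcon
      have := hrP i
      rw [hP, Finset.mem_filter] at this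
      rw [hi] at this
      exact this.2.ne_empty rfl
  rw [← Finset.sum_fiberwise_of_maps_to hmaps F]
  refine Finset.sum_congr rfl fun 𝒮 h𝒮 => ?_
  rw [Finset.mem_filter] at h𝒮
  obtain ⟨-, hcard, hemp⟩ := h𝒮
  -- fixed enumeration of 𝒮
  set ee : Fin n ≃ {S // S ∈ 𝒮} := (finCongr hcard.symm).trans 𝒮.equivFin.symm with hee
  set e : Fin n → Finset (Fin n) := fun j => (ee j : Finset (Fin n)) with he
  have heinj : Function.Injective e := fun a b hab => ee.injective (Subtype.ext hab)
  have heS : ∀ j, e j ∈ 𝒮 := fun j => (ee j).2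
  set N : Matrix (Fin n) (Fin n) ℝ := Matrix.of fun i j => if j ∈ e i then (1:ℝ) else 0
    with hN
  have hNd : detSqCols n 𝒮 = (N.det)^2 := by
    have hDT : (Matrix.of fun i j : Fin n =>
        if i ∈ ((𝒮.equivFin.symm (Fin.cast hcard.symm j)) : Finset (Fin n)) then (1:ℝ) else 0)
        = N.transpose := by
      ext i j
      simp [hN, he, hee, Matrix.transpose_apply]
    rw [detSqCols, dif_pos hcard, hDT, Matrix.det_transpose]
  -- fiber sum equals sum over permutations
  have hfiber : ∑ r ∈ ((Fintype.piFinset (fun _ : Fin n => P)).filter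
        Function.Injective).filter (fun r => Finset.image r Finset.univ = 𝒮), F r =
      ∑ π : Equiv.Perm (Fin n), F (fun j => e (π j)) := by
    symm
    refine Finset.sum_bij (i := fun π _ => fun j => e (π j)) ?_ ?_ ?_ ?_
    · intro π _
      simp only [Finset.mem_filter, Fintype.mem_piFinset]
      have hinj' : Function.Injective (fun j => e (π j)) :=
        fun a b h => π.injective (heinj h)
      have himg : Finset.image (fun j => e (π j)) Finset.univ = 𝒮 := by
        apply Finset.eq_of_subset_of_card_le
        · intro S hS
          rw [Finset.mem_image] at hS
          obtain ⟨j, -, hj⟩ := hS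
          rw [← hj]; exact heS _
        · rw [hcard, Finset.card_image_of_injective _ hinj',
            Finset.card_univ, Fintype.card_fin]
      refine ⟨⟨fun j => ?_, hinj'⟩, himg⟩
      · rw [hP, Finset.mem_filter]
        refine ⟨Finset.mem_univ _, ?_⟩
        rw [Finset.nonempty_iff_ne_empty]
        intro hcon
        exact hemp (hcon ▸ heS (π j))
    · intro π1 _ π2 _ hx
      exact Equiv.ext fun j => heinj (congrFun hx j)
    · intro r hr
      simp only [Finset.mem_filter, Fintype.mem_piFinset] at hr
      obtain ⟨⟨hrP, hrinj⟩, himg⟩ := hr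
      have hrS : ∀ j, r j ∈ 𝒮 := by
        intro j
        rw [← himg]
        exact Finset.mem_image_of_mem r (Finset.mem_univ j)
      have hinj2 : Function.Injective (fun j => ee.symm ⟨r j, hrS j⟩) := by
        intro a b hab
        apply hrinj
        have := congrArg (fun x => ((ee x : {S // S ∈ 𝒮}) : Finset (Fin n)))
          (hab : ee.symm ⟨r a, hrS a⟩ = ee.symm ⟨r b, hrS b⟩)
        simpa using this
      obtain ⟨π, hπ⟩ : ∃ π : Equiv.Perm (Fin n),
          ∀ j, π j = ee.symm ⟨r j, hrS j⟩ :=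
        ⟨Equiv.ofBijective _ (Finite.injective_iff_bijective.mp hinj2), fun j => rfl⟩
      refine ⟨π, Finset.mem_univ _, ?_⟩
      funext j
      show (ee (π j) : Finset (Fin n)) = r j
      rw [hπ j, Equiv.apply_symm_apply]
    · intro π _
      rfl
  rw [hfiber]
  -- compute the sum over permutations
  have hterm : ∀ π : Equiv.Perm (Fin n),
      F (fun j => e (π j)) =
        (∏ S ∈ 𝒮, c S) * (Matrix.det N *
          (Equiv.Perm.sign π : ℤ) * ∏ i, N (π i) i) := by
    intro π
    have hBe : B (fun j => e (π j)) = N.submatrix π id := by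
      ext i j
      simp [hB, hN, Matrix.submatrix_apply]
    have hdet : (B (fun j => e (π j))).det = (Equiv.Perm.sign π : ℤ) * N.det := by
      rw [hBe, Matrix.det_permute]
    have hprod : (∏ i, (c (e (π i)) * if i ∈ e (π i) then (1:ℝ) else 0)) =
        (∏ S ∈ 𝒮, c S) * ∏ i, N (π i) i := by
      rw [Finset.prod_mul_distrib]
      have h1 : (∏ i, c (e (π i))) = ∏ S ∈ 𝒮, c S := by
        rw [Equiv.prod_comp π (fun i => c (e i))]
        show (∏ i, c ((ee i : Finset (Fin n)))) = ∏ S ∈ 𝒮, c S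
        rw [← Finset.prod_coe_sort 𝒮 c]
        exact Equiv.prod_comp ee (fun x : {S // S ∈ 𝒮} => c (x : Finset (Fin n)))
      have h2 : (∏ i, if i ∈ e (π i) then (1:ℝ) else 0) = ∏ i, N (π i) i := rfl
      rw [h1, h2]
    rw [hF]
    simp only
    rw [hprod, hdet]
    ring
  rw [Finset.sum_congr rfl (fun π _ => hterm π)]
  rw [← Finset.mul_sum, hNd]
  congr 1
  rw [sq]
  calc ∑ π : Equiv.Perm (Fin n), Matrix.det N * (Equiv.Perm.sign π : ℤ) * ∏ i, N (π i) i
      = Matrix.det N * ∑ π : Equiv.Perm (Fin n), ((Equiv.Perm.sign π : ℤ) : ℝ) * ∏ i, N (π i) i := by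
        rw [Finset.mul_sum]; refine Finset.sum_congr rfl fun π _ => by ring
    _ = Matrix.det N * Matrix.det N := by rw [← Matrix.det_apply']
end

section
/- The polynomial R(y) = Σ_{{S_1,…,S_n}} det(M^{1_{S_1},…,1_{S_n}})² · ∏_{∅≠P∉{S_1,…,S_n}} f_P(y) (sum over all collections of n distinct nonempty subsets S_1,…,S_n of {1,…,n}) is strictly positive at every point of the closure of Ω. -/
/-- On the closure of `Ω` all forms are nonnegative. -/
lemma fS_nonneg {n : ℕ} {q : ℕ → ℕ} {y : Fin n → ℝ} (hy : y ∈ closure (Omega n q))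
    (S : Finset (Fin n)) (hS : S.Nonempty) : 0 ≤ fS n q S y := by
  have hc : Continuous fun z : Fin n → ℝ => fS n q S z := by
    unfold fS
    exact continuous_const.add (continuous_finset_sum _ fun i _ => continuous_apply i)
  have hsub : closure (Omega n q) ⊆ {z | 0 ≤ fS n q S z} :=
    closure_minimal (fun z hz => (hz S hS).le) (isClosed_le continuous_const hc)
  exact hsub hy

/-- The tight sets form a chain. -/
lemma tight_chain {n : ℕ} {q : ℕ → ℕ} {y : Fin n → ℝ} (hq : qCond q)
    (h0 : ∀ S : Finset (Fin n), S.Nonempty → 0 ≤ fS n q S y)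
    {S T : Finset (Fin n)} (hS : S.Nonempty) (hT : T.Nonempty)
    (hS0 : fS n q S y = 0) (hT0 : fS n q T y = 0) : S ⊆ T ∨ T ⊆ S := by
  by_contra hcon
  push_neg at hcon
  obtain ⟨h1, h2⟩ := hcon
  have hS' : S.card < (S ∪ T).card :=
    Finset.card_lt_card ⟨Finset.subset_union_left,
      fun h => h2 fun i hi => h (Finset.mem_union_right S hi)⟩
  have hT' : T.card < (S ∪ T).card :=
    Finset.card_lt_card ⟨Finset.subset_union_right,
      fun h => h1 fun i hi => h (Finset.mem_union_left T hi)⟩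
  have hcard : max S.card T.card + 1 ≤ (S ∪ T).card := by omega
  have hqlt : q S.card + q T.card < q ((S ∪ T).card) :=
    lt_of_lt_of_le (hq.2.1 S.card T.card) (q_mono hq hcard)
  have hqltR : (q S.card : ℝ) + q T.card < q ((S ∪ T).card) := by exact_mod_cast hqlt
  have eS : ∑ i ∈ S, y i = (q S.card : ℝ) := by unfold fS at hS0; linarith
  have eT : ∑ i ∈ T, y i = (q T.card : ℝ) := by unfold fS at hT0; linarith
  have eUI : ∑ i ∈ S ∪ T, y i + ∑ i ∈ S ∩ T, y i = (q S.card : ℝ) + q T.card := by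
    rw [Finset.sum_union_inter, eS, eT]
  have hU : 0 ≤ fS n q (S ∪ T) y := h0 _ (hS.mono Finset.subset_union_left)
  unfold fS at hU
  by_cases hI : (S ∩ T).Nonempty
  · have hI' : 0 ≤ fS n q (S ∩ T) y := h0 _ hI
    unfold fS at hI'
    have : (0:ℝ) ≤ q ((S ∩ T).card) := Nat.cast_nonneg _
    linarith
  · rw [Finset.not_nonempty_iff_eq_empty] at hI
    rw [hI] at eUI
    simp only [Finset.sum_empty, add_zero] at eUI
    linarith

/-- Existence of a full flag compatible with a chain of "tight" sets. -/
lemma exists_flag {n : ℕ} (hn : 1 ≤ n) (tight : Finset (Fin n) → Prop)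
    (hchain : ∀ S T, tight S → tight T → S ⊆ T ∨ T ⊆ S) :
    ∃ C : ℕ → Finset (Fin n),
      (∀ k, k ≤ n → (C k).card = k) ∧
      (∀ k, k < n → C k ⊆ C (k + 1)) ∧
      (∀ k, k ≤ n → ∀ T, tight T → (T.card ≤ k → T ⊆ C k) ∧ (k ≤ T.card → C k ⊆ T)) := by
  classical
  suffices H : ∀ m, m ≤ n → ∃ C : ℕ → Finset (Fin n),
      (∀ k, k ≤ m → (C k).card = k) ∧
      (∀ k, k < m → C k ⊆ C (k + 1)) ∧
      (∀ k, k ≤ m → ∀ T, tight T → (T.card ≤ k → T ⊆ C k) ∧ (k ≤ T.card → C k ⊆ T)) by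
    exact H n le_rfl
  intro m
  induction m with
  | zero =>
    intro _
    refine ⟨fun _ => ∅, ?_, ?_, ?_⟩
    · intro k hk; interval_cases k; simp
    · omega
    · intro k hk T hT
      interval_cases k
      constructor
      · intro hTc
        have : T = ∅ := Finset.card_eq_zero.mp (Nat.le_zero.mp hTc)
        simp [this]
      · intro _; exact Finset.empty_subset T
  | succ m ih =>
    intro hm1
    obtain ⟨C, hcard, hch, hinv⟩ := ih (by omega)
    set D : Finset (Fin n) :=
      Finset.univ.filter (fun i => ∀ T, tight T → m + 1 ≤ T.card → i ∈ T) with hD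
    have hCD : C m ⊆ D := by
      intro i hi
      rw [hD, Finset.mem_filter]
      refine ⟨Finset.mem_univ i, fun T hT hTc => ?_⟩
      exact (hinv m le_rfl T hT).2 (by omega) hi
    have hDcard : m + 1 ≤ D.card := by
      by_cases hex : ∃ T, tight T ∧ m + 1 ≤ T.card
      · set 𝒯 : Finset (Finset (Fin n)) :=
          Finset.univ.filter (fun T => tight T ∧ m + 1 ≤ T.card) with h𝒯
        have h𝒯ne : 𝒯.Nonempty := by
          obtain ⟨T, hT, hTc⟩ := hex
          exact ⟨T, by rw [h𝒯, Finset.mem_filter]; exact ⟨Finset.mem_univ T, hT, hTc⟩⟩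
        obtain ⟨T0, hT0mem, hT0min⟩ := Finset.exists_min_image 𝒯 Finset.card h𝒯ne
        rw [h𝒯, Finset.mem_filter] at hT0mem
        have hT0D : T0 ⊆ D := by
          intro i hi
          rw [hD, Finset.mem_filter]
          refine ⟨Finset.mem_univ i, fun T hT hTc => ?_⟩
          rcases hchain T0 T hT0mem.2.1 hT with hsub | hsub
          · exact hsub hi
          · have hle : T0.card ≤ T.card := hT0min T
              (by rw [h𝒯, Finset.mem_filter]; exact ⟨Finset.mem_univ T, hT, hTc⟩)
            have : T = T0 := Finset.eq_of_subset_of_card_le hsub hle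
            rw [this]; exact hi
        calc m + 1 ≤ T0.card := hT0mem.2.2
          _ ≤ D.card := Finset.card_le_card hT0D
      · push_neg at hex
        have : D = Finset.univ := by
          apply Finset.eq_univ_of_forall
          intro i
          rw [hD, Finset.mem_filter]
          exact ⟨Finset.mem_univ i, fun T hT hTc => absurd hTc (by have := hex T hT; omega)⟩
        rw [this, Finset.card_univ, Fintype.card_fin]; omega
    have hsd : (D \ C m).Nonempty := by
      rw [← Finset.card_pos, Finset.card_sdiff_of_subset hCD, hcard m le_rfl]
      omega
    obtain ⟨x, hx⟩ := hsd
    rw [Finset.mem_sdiff] at hx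
    obtain ⟨hxD, hxC⟩ := hx
    have hxT : ∀ T, tight T → m + 1 ≤ T.card → x ∈ T := by
      rw [hD, Finset.mem_filter] at hxD
      exact hxD.2
    refine ⟨fun k => if k ≤ m then C k else insert x (C m), ?_, ?_, ?_⟩
    · intro k hk
      by_cases h : k ≤ m
      · simp only [if_pos h]; exact hcard k h
      · have hk' : k = m + 1 := by omega
        subst hk'
        show (if m + 1 ≤ m then C (m + 1) else insert x (C m)).card = m + 1
        rw [if_neg (by omega : ¬ m + 1 ≤ m), Finset.card_insert_of_notMem hxC,
          hcard m le_rfl]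
    · intro k hk
      by_cases h : k < m
      · simp only [if_pos (by omega : k ≤ m), if_pos (by omega : k + 1 ≤ m)]
        exact hch k h
      · have hk' : k = m := by omega
        subst hk'
        simp only [if_pos le_rfl, if_neg (by omega : ¬ k + 1 ≤ k)]
        exact Finset.subset_insert x (C k)
    · intro k hk T hT
      by_cases h : k ≤ m
      · simp only [if_pos h]; exact hinv k h T hT
      · have hk' : k = m + 1 := by omega
        subst hk'
        simp only [if_neg (by omega : ¬ m + 1 ≤ m)]
        have hsub : m + 1 ≤ T.card → insert x (C m) ⊆ T := fun hTc =>
          Finset.insert_subset (hxT T hT hTc) ((hinv m le_rfl T hT).2 (by omega))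
        constructor
        · intro hTc
          by_cases hTm : T.card ≤ m
          · exact ((hinv m le_rfl T hT).1 hTm).trans (Finset.subset_insert x (C m))
          · have hTc' : T.card = m + 1 := by omega
            have h1 := hsub (by omega)
            have : insert x (C m) = T := Finset.eq_of_subset_of_card_le h1
              (by rw [Finset.card_insert_of_notMem hxC, hcard m le_rfl]; omega)
            rw [this]
        · exact hsub

theorem Rpoly_pos_on_closure_Omega
    (n : ℕ) (hn : 1 ≤ n) (q : ℕ → ℕ) (hq : qCond q)
    (y : Fin n → ℝ) (hy : y ∈ closure (Omega n q)) :
    0 < Rpoly n q y := by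
  classical
  have h0 : ∀ S : Finset (Fin n), S.Nonempty → 0 ≤ fS n q S y := fS_nonneg hy
  set tight : Finset (Fin n) → Prop := fun T => T.Nonempty ∧ fS n q T y = 0 with htight
  obtain ⟨C, hcard, hch, hinv⟩ := exists_flag hn tight
    (fun S T hS hT => tight_chain hq h0 hS.1 hT.1 hS.2 hT.2)
  -- monotonicity of the flag
  have hmono : ∀ j, j ≤ n → ∀ k, k ≤ j → C k ⊆ C j := by
    intro j
    induction j with
    | zero => intro _ k hk; interval_cases k; exact Finset.Subset.refl _
    | succ j ihj =>
      intro hj k hk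
      by_cases h : k = j + 1
      · subst h; exact Finset.Subset.refl _
      · exact (ihj (by omega) k (by omega)).trans (hch j (by omega))
  -- every tight set occurs in the flag
  have htight_eq : ∀ T, tight T → T = C T.card := by
    intro T hT
    have h1 : T.card ≤ n := by
      simpa using Finset.card_le_card (Finset.subset_univ T)
    exact Finset.Subset.antisymm ((hinv T.card h1 T hT).1 le_rfl)
      ((hinv T.card h1 T hT).2 le_rfl)
  set 𝒮 : Finset (Finset (Fin n)) := Finset.image (fun k : Fin n => C (k + 1)) Finset.univ
    with h𝒮
  have hCinjOn : ∀ k k' : Fin n, C (k + 1) = C (k' + 1) → k = k' := by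
    intro k k' he
    have h1 : ((k : ℕ) + 1) = ((k' : ℕ) + 1) := by
      rw [← hcard _ (by omega : (k : ℕ) + 1 ≤ n), ← hcard _ (by omega : (k' : ℕ) + 1 ≤ n), he]
    exact Fin.ext (by omega)
  have hcard𝒮 : 𝒮.card = n := by
    rw [h𝒮, Finset.card_image_of_injOn (fun k _ k' _ h => hCinjOn k k' h),
      Finset.card_univ, Fintype.card_fin]
  have hmem𝒮 : ∀ T, tight T → T ∈ 𝒮 := by
    intro T hT
    have h1 : 1 ≤ T.card := hT.1.card_pos
    have h2 : T.card ≤ n := by simpa using Finset.card_le_card (Finset.subset_univ T)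
    rw [h𝒮, Finset.mem_image]
    refine ⟨⟨T.card - 1, by omega⟩, Finset.mem_univ _, ?_⟩
    show C (T.card - 1 + 1) = T
    have he : T.card - 1 + 1 = T.card := by omega
    rw [he]
    exact (htight_eq T hT).symm
  have hemp𝒮 : ∅ ∉ 𝒮 := by
    rw [h𝒮, Finset.mem_image]
    rintro ⟨k, -, hk⟩
    have := hcard ((k : ℕ) + 1) (by omega)
    rw [hk] at this
    simp at this
  have hmemC : ∀ A ∈ 𝒮, ∃ k : Fin n, A = C ((k : ℕ) + 1) := by
    intro A hA
    rw [h𝒮, Finset.mem_image] at hA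
    obtain ⟨k, -, hk⟩ := hA
    exact ⟨k, hk.symm⟩
  -- positivity of the determinant term
  have hdet : 0 < detSqCols n 𝒮 := by
    rw [detSqCols, dif_pos hcard𝒮]
    set S : Fin n → Finset (Fin n) :=
      fun j => ((𝒮.equivFin.symm (Fin.cast hcard𝒮.symm j)) : Finset (Fin n)) with hSdef
    have hSmem : ∀ j, S j ∈ 𝒮 := fun j => (𝒮.equivFin.symm (Fin.cast hcard𝒮.symm j)).2
    have hSinj : Function.Injective S := by
      intro j j' he
      have : 𝒮.equivFin.symm (Fin.cast hcard𝒮.symm j) =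
          𝒮.equivFin.symm (Fin.cast hcard𝒮.symm j') := Subtype.ext he
      have := 𝒮.equivFin.symm.injective this
      simpa [Fin.ext_iff] using this
    -- rank function
    have hCn : C n = Finset.univ := Finset.eq_univ_of_card _ (by
      rw [hcard n le_rfl, Fintype.card_fin])
    have hEx : ∀ i : Fin n, ∃ m, i ∈ C m := fun i => ⟨n, by rw [hCn]; exact Finset.mem_univ i⟩
    set ρ : Fin n → ℕ := fun i => Nat.find (hEx i) with hρ
    have hρspec : ∀ i, i ∈ C (ρ i) := fun i => Nat.find_spec (hEx i)
    have hρle : ∀ i, ρ i ≤ n := fun i =>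
      Nat.find_min' (hEx i) (by rw [hCn]; exact Finset.mem_univ i)
    have hρmin : ∀ (i : Fin n) (m : ℕ), m < ρ i → i ∉ C m :=
      fun i m h => Nat.find_min (hEx i) h
    have hρpos : ∀ i, 1 ≤ ρ i := by
      intro i
      by_contra hlt
      have h0' : ρ i = 0 := by omega
      have hsp := hρspec i
      rw [h0'] at hsp
      have hC0 : C 0 = ∅ := Finset.card_eq_zero.mp (hcard 0 (by omega))
      rw [hC0] at hsp
      exact absurd hsp (Finset.notMem_empty i)
    have hmem_iff : ∀ (i : Fin n) (m : ℕ), m ≤ n → (i ∈ C m ↔ ρ i ≤ m) := by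
      intro i m hm
      constructor
      · intro him; exact Nat.find_min' (hEx i) him
      · intro hle; exact hmono m hm (ρ i) hle (hρspec i)
    -- the row permutation
    have hσinj : Function.Injective (fun i : Fin n => (⟨ρ i - 1, by
        have := hρle i; have := hρpos i; omega⟩ : Fin n)) := by
      intro i i' he
      simp only [Fin.mk.injEq] at he
      have hρeq : ρ i = ρ i' := by have := hρpos i; have := hρpos i'; omega
      set m := ρ i with hm
      have h1 : i ∈ C m := hρspec i
      have h2 : i' ∈ C m := by rw [hρeq] at *; exact hρspec i'
      have h3 : i ∉ C (m - 1) := hρmin i (m - 1) (by have := hρpos i; omega)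
      have h4 : i' ∉ C (m - 1) := hρmin i' (m - 1) (by have := hρpos i'; omega)
      have hsub : C (m - 1) ⊆ C m := hmono m (hρle i) (m - 1) (by omega)
      have hcard1 : (C m \ C (m - 1)).card = 1 := by
        rw [Finset.card_sdiff_of_subset hsub, hcard m (hρle i), hcard (m - 1) (by have := hρle i; omega)]
        have := hρpos i; omega
      obtain ⟨z, hz⟩ := Finset.card_eq_one.mp hcard1
      have hi : i ∈ C m \ C (m - 1) := Finset.mem_sdiff.mpr ⟨h1, h3⟩
      have hi' : i' ∈ C m \ C (m - 1) := Finset.mem_sdiff.mpr ⟨h2, h4⟩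
      rw [hz, Finset.mem_singleton] at hi hi'
      rw [hi, hi']
    set σ0 : Fin n → Fin n := fun i => ⟨ρ i - 1, by
      have := hρle i; have := hρpos i; omega⟩ with hσ0
    have hσbij : Function.Bijective σ0 :=
      (Fintype.bijective_iff_injective_and_card σ0).mpr ⟨hσinj, rfl⟩
    set σ : Equiv.Perm (Fin n) := Equiv.ofBijective σ0 hσbij with hσ
    -- the column permutation
    have hSk : ∀ j, ∃ k : Fin n, S j = C ((k : ℕ) + 1) := fun j => hmemC (S j) (hSmem j)
    have hScard : ∀ j, 1 ≤ (S j).card ∧ (S j).card ≤ n := by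
      intro j
      obtain ⟨k, hk⟩ := hSk j
      rw [hk, hcard _ (by omega)]
      omega
    set b0 : Fin n → Fin n := fun j => ⟨(S j).card - 1, by have := hScard j; omega⟩ with hb0
    have hSb : ∀ j, S j = C (((b0 j : Fin n) : ℕ) + 1) := by
      intro j
      obtain ⟨k, hk⟩ := hSk j
      have hc : (S j).card = (k : ℕ) + 1 := by rw [hk, hcard _ (by omega)]
      have : ((b0 j : Fin n) : ℕ) + 1 = (k : ℕ) + 1 := by
        simp only [hb0]; omega
      rw [this, ← hk]
    have hbinj : Function.Injective b0 := by
      intro j j' he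
      apply hSinj
      rw [hSb j, hSb j', he]
    have hbbij : Function.Bijective b0 :=
      (Fintype.bijective_iff_injective_and_card b0).mpr ⟨hbinj, rfl⟩
    set g : Equiv.Perm (Fin n) := (Equiv.ofBijective b0 hbbij).symm with hg
    set M : Matrix (Fin n) (Fin n) ℝ :=
      Matrix.of fun i j : Fin n => if i ∈ S j then (1:ℝ) else 0 with hM
    -- the permuted matrix is unitriangular
    have hentry : ∀ i j : Fin n, (M.submatrix ⇑σ.symm ⇑g) i j =
        if (i : ℕ) ≤ (j : ℕ) then (1:ℝ) else 0 := by
      intro i j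
      have h1 : S (g j) = C (((b0 (g j)) : ℕ) + 1) := hSb (g j)
      have h2 : b0 (g j) = j := by
        have : (Equiv.ofBijective b0 hbbij) (g j) = j := by
          rw [hg]; exact (Equiv.ofBijective b0 hbbij).apply_symm_apply j
        exact this
      have h3 : ρ (σ.symm i) - 1 = (i : ℕ) := by
        have : σ (σ.symm i) = i := σ.apply_symm_apply i
        have h4 : σ0 (σ.symm i) = i := this
        rw [hσ0] at h4
        exact congrArg Fin.val h4
      have h5 : σ.symm i ∈ S (g j) ↔ (i : ℕ) ≤ (j : ℕ) := by
        rw [h1, h2, hmem_iff _ _ (by omega)]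
        have := hρpos (σ.symm i)
        omega
      simp only [Matrix.submatrix_apply, hM, Matrix.of_apply]
      by_cases hc : (i : ℕ) ≤ (j : ℕ)
      · rw [if_pos hc, if_pos (h5.mpr hc)]
      · rw [if_neg hc, if_neg (fun hmem => hc (h5.mp hmem))]
    have hdetN : (M.submatrix ⇑σ.symm ⇑g).det = 1 := by
      rw [Matrix.det_of_upperTriangular]
      · apply Finset.prod_eq_one
        intro i _
        rw [hentry i i, if_pos le_rfl]
      · intro i j hij
        rw [hentry i j, if_neg (by exact_mod_cast Nat.not_le.mpr hij)]
    have hdetM : M.det ≠ 0 := by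
      intro hzero
      have h1 : M.submatrix ⇑σ.symm ⇑g = (M.submatrix ⇑σ.symm id).submatrix id ⇑g := by
        rw [Matrix.submatrix_submatrix]; rfl
      rw [h1, Matrix.det_permute' g, Matrix.det_permute σ.symm, hzero] at hdetN
      simp at hdetN
    exact lt_of_le_of_ne (sq_nonneg _) (Ne.symm (pow_ne_zero 2 hdetM))
  -- assemble
  rw [Rpoly]
  apply Finset.sum_pos'
  · intro 𝒯 h𝒯
    apply mul_nonneg
    · rw [detSqCols]
      split
      · exact sq_nonneg _
      · exact le_rfl
    · apply Finset.prod_nonneg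
      intro P hP
      rw [Finset.mem_filter] at hP
      exact h0 P hP.2.1
  · refine ⟨𝒮, ?_, ?_⟩
    · rw [Finset.mem_filter]
      exact ⟨Finset.mem_univ 𝒮, hcard𝒮, hemp𝒮⟩
    · apply mul_pos hdet
      apply Finset.prod_pos
      intro P hP
      rw [Finset.mem_filter] at hP
      obtain ⟨-, hPne, hPnot⟩ := hP
      rcases lt_or_eq_of_le (h0 P hPne) with h | h
      · exact h
      · exact absurd (hmem𝒮 P ⟨hPne, h.symm⟩) hPnot
end

section
/- For every nonempty S ⊆ {1,…,n}, the polynomial P_S(y) = Σ_{i∈S} ∏_{T : i∈T, S⊄T} f_T(y) (inner product over all subsets T of {1,…,n} containing i but not containing S) is strictly positive at every point of the closure of Ω' = Ω ∩ {y ∈ ℝ^n : Σ_{i=1}^n F_i(y) < 1}. -/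
/-- The region `Ω' = Ω ∩ {Σ_i F_i < 1}`. -/
def Omega' (n : ℕ) (q : ℕ → ℕ) : Set (Fin n → ℝ) :=
  Omega n q ∩ {y | ∑ i, Fmap n q y i < 1}

/-- The polynomial `P_S(y) = Σ_{i∈S} ∏_{T : i∈T, S⊄T} f_T(y)`. -/
def PS (n : ℕ) (q : ℕ → ℕ) (S : Finset (Fin n)) (y : Fin n → ℝ) : ℝ :=
  ∑ i ∈ S, ∏ T ∈ Finset.univ.filter (fun T : Finset (Fin n) => i ∈ T ∧ ¬ S ⊆ T), fS n q T y

lemma fS_nonneg_closure {n : ℕ} {q : ℕ → ℕ} {y : Fin n → ℝ}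
    (hy : y ∈ closure (Omega' n q)) (T : Finset (Fin n)) (hT : T.Nonempty) :
    0 ≤ fS n q T y := by
  have hc : Continuous (fS n q T) := by
    unfold fS
    exact continuous_const.add (continuous_finset_sum _ fun i _ => continuous_apply i)
  have hsub : closure (Omega' n q) ⊆ {z | 0 ≤ fS n q T z} :=
    closure_minimal (fun z hz => le_of_lt (hz.1 T hT))
      (isClosed_le continuous_const hc)
  exact hsub hy

lemma coord_nonneg {n : ℕ} {q : ℕ → ℕ} {y : Fin n → ℝ}
    (hy : y ∈ closure (Omega' n q)) (i : Fin n) : 0 ≤ y i := by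
  have h := fS_nonneg_closure hy {i} ⟨i, Finset.mem_singleton_self i⟩
  simp only [fS, Finset.card_singleton, Finset.sum_singleton] at h
  have : (0:ℝ) ≤ (q 1 : ℝ) := Nat.cast_nonneg _
  linarith

lemma zeros_chain {n : ℕ} {q : ℕ → ℕ} (hq : qCond q) {y : Fin n → ℝ}
    (hy : y ∈ closure (Omega' n q)) {T T' : Finset (Fin n)}
    (hT : T.Nonempty) (hT' : T'.Nonempty)
    (h0 : fS n q T y = 0) (h0' : fS n q T' y = 0) :
    T ⊆ T' ∨ T' ⊆ T := by
  by_contra h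
  push_neg at h
  obtain ⟨h1, h2⟩ := h
  have hss1 : T ⊂ T ∪ T' := by
    refine ⟨Finset.subset_union_left, fun hc => ?_⟩
    exact h2 ((Finset.union_subset_iff.mp hc).2)
  have hss2 : T' ⊂ T ∪ T' := by
    refine ⟨Finset.subset_union_right, fun hc => ?_⟩
    exact h1 ((Finset.union_subset_iff.mp hc).1)
  have hcard : max T.card T'.card + 1 ≤ (T ∪ T').card :=
    Nat.succ_le_of_lt (max_lt (Finset.card_lt_card hss1) (Finset.card_lt_card hss2))
  have hq1 : q T.card + q T'.card < q (max T.card T'.card + 1) := hq.2.1 _ _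
  have hq2 : q (max T.card T'.card + 1) ≤ q (T ∪ T').card := q_mono hq hcard
  have hsum : ∑ i ∈ T ∪ T', y i + ∑ i ∈ T ∩ T', y i = ∑ i ∈ T, y i + ∑ i ∈ T', y i :=
    Finset.sum_union_inter
  have hTeq : ∑ i ∈ T, y i = (q T.card : ℝ) := by
    simp only [fS] at h0; linarith
  have hT'eq : ∑ i ∈ T', y i = (q T'.card : ℝ) := by
    simp only [fS] at h0'; linarith
  have hinter : (0:ℝ) ≤ ∑ i ∈ T ∩ T', y i :=
    Finset.sum_nonneg fun i _ => coord_nonneg hy i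
  have hU : 0 ≤ fS n q (T ∪ T') y :=
    fS_nonneg_closure hy _ (hT.mono Finset.subset_union_left)
  simp only [fS] at hU
  have hc1 : (q T.card : ℝ) + (q T'.card : ℝ) < (q (max T.card T'.card + 1) : ℝ) := by
    exact_mod_cast hq1
  have hc2 : ((q (max T.card T'.card + 1) : ℕ) : ℝ) ≤ (q (T ∪ T').card : ℝ) := by
    exact_mod_cast hq2
  linarith

theorem PS_pos_on_closure_Omega'
    (n : ℕ) (hn : 1 ≤ n) (q : ℕ → ℕ) (hq : qCond q)
    (S : Finset (Fin n)) (hS : S.Nonempty)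
    (y : Fin n → ℝ) (hy : y ∈ closure (Omega' n q)) :
    0 < PS n q S y := by
  -- the "bad" sets: nonempty zero sets not containing S
  set Z : Finset (Finset (Fin n)) :=
    Finset.univ.filter (fun T => fS n q T y = 0 ∧ ¬ S ⊆ T ∧ T.Nonempty) with hZ
  -- find i ∈ S avoiding all bad sets
  have key : ∃ i ∈ S, ∀ T : Finset (Fin n), i ∈ T → ¬ S ⊆ T → 0 < fS n q T y := by
    rcases Z.eq_empty_or_nonempty with hZe | hZne
    · obtain ⟨i, hi⟩ := hS
      refine ⟨i, hi, fun T hiT hST => ?_⟩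
      have hnn := fS_nonneg_closure hy T ⟨i, hiT⟩
      rcases lt_or_eq_of_le hnn with h | h
      · exact h
      · exfalso
        have : T ∈ Z := by
          rw [hZ]
          simp only [Finset.mem_filter, Finset.mem_univ, true_and]
          exact ⟨h.symm, hST, ⟨i, hiT⟩⟩
        rw [hZe] at this
        exact absurd this (Finset.notMem_empty _)
    · obtain ⟨M, hM, hMmax⟩ := Z.exists_max_image Finset.card hZne
      have hMprop : fS n q M y = 0 ∧ ¬ S ⊆ M ∧ M.Nonempty := by
        rw [hZ] at hM; simpa using hM
      -- every bad T is contained in M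
      have hsub : ∀ T ∈ Z, T ⊆ M := by
        intro T hT
        have hTprop : fS n q T y = 0 ∧ ¬ S ⊆ T ∧ T.Nonempty := by
          rw [hZ] at hT; simpa using hT
        rcases zeros_chain hq hy hTprop.2.2 hMprop.2.2 hTprop.1 hMprop.1 with h | h
        · exact h
        · have := Finset.eq_of_subset_of_card_le h (hMmax T hT)
          rw [this]
      obtain ⟨i, hiS, hiM⟩ := Finset.not_subset.mp hMprop.2.1
      refine ⟨i, hiS, fun T hiT hST => ?_⟩
      have hnn := fS_nonneg_closure hy T ⟨i, hiT⟩
      rcases lt_or_eq_of_le hnn with h | h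
      · exact h
      · exfalso
        have hTZ : T ∈ Z := by
          rw [hZ]
          simp only [Finset.mem_filter, Finset.mem_univ, true_and]
          exact ⟨h.symm, hST, ⟨i, hiT⟩⟩
        exact hiM (hsub T hTZ hiT)
  obtain ⟨i, hiS, hi⟩ := key
  unfold PS
  refine Finset.sum_pos' (fun j hj => Finset.prod_nonneg fun T hT => ?_) ⟨i, hiS, ?_⟩
  · simp only [Finset.mem_filter, Finset.mem_univ, true_and] at hT
    exact fS_nonneg_closure hy T ⟨j, hT.1⟩
  · refine Finset.prod_pos fun T hT => ?_
    simp only [Finset.mem_filter, Finset.mem_univ, true_and] at hT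
    exact hi T hT.1 hT.2
end

section
/- The map F restricted to Ω' = Ω ∩ {y ∈ ℝ^n : Σ_{i=1}^n F_i(y) < 1} is a bijection from Ω' onto the open simplex Δ_n = {x ∈ ℝ^n : x_i > 0 for all i and Σ_{i=1}^n x_i < 1}; equivalently, F^{-1}(Δ_n) ∩ Ω = Ω'. -/
/-- The open simplex `Δ_n = {x : x_i > 0, Σ x_i < 1}`. -/
def simplex' (n : ℕ) : Set (Fin n → ℝ) :=
  {x | (∀ i, 0 < x i) ∧ ∑ i, x i < 1}

namespace FmapAux
open Real Finset

noncomputable def phi (t : ℝ) : ℝ := t * Real.log t - t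

lemma phi_cont : Continuous phi := Real.continuous_mul_log.sub continuous_id

lemma phi_diff_le {u v : ℝ} (hu : 0 ≤ u) (hv : 0 < v) :
    phi v - phi u ≤ (v - u) * Real.log v := by
  rcases eq_or_lt_of_le hu with h | hu
  · simp [phi, ← h, Real.log_zero]
    nlinarith [hv.le]
  · have h1 : Real.log (v / u) ≤ v / u - 1 := Real.log_le_sub_one_of_pos (by positivity)
    rw [Real.log_div (ne_of_gt hv) (ne_of_gt hu)] at h1
    have h2 : u * (Real.log v - Real.log u) ≤ u * (v / u - 1) :=
      mul_le_mul_of_nonneg_left h1 hu.le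
    have h3 : u * (v / u - 1) = v - u := by field_simp
    simp only [phi]; nlinarith
lemma phi_diff_ge {u v : ℝ} (hu : 0 < u) (hv : 0 < v) :
    (v - u) * Real.log u ≤ phi v - phi u := by
  have h1 : Real.log (u / v) ≤ u / v - 1 := Real.log_le_sub_one_of_pos (by positivity)
  rw [Real.log_div (ne_of_gt hu) (ne_of_gt hv)] at h1
  have h2 : v * (Real.log u - Real.log v) ≤ v * (u / v - 1) :=
    mul_le_mul_of_nonneg_left h1 hv.le
  have h3 : v * (u / v - 1) = u - v := by field_simp
  simp only [phi]; nlinarith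

lemma phi_ge {t : ℝ} (ht : 0 ≤ t) : -1 ≤ phi t := by
  rcases eq_or_lt_of_le ht with h | ht
  · simp [phi, ← h]
  · have h1 : Real.log (1 / t) ≤ 1 / t - 1 := Real.log_le_sub_one_of_pos (by positivity)
    rw [Real.log_div one_ne_zero (ne_of_gt ht), Real.log_one] at h1
    have := mul_le_mul_of_nonneg_left h1 ht.le
    simp only [phi]
    have h3 : t * (1 / t - 1) = 1 - t := by field_simp
    nlinarith

section q
variable {q : ℕ → ℕ} (hq : qCond q)
include hq

lemma q_pos : ∀ a, 0 < q a := by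
  intro a; induction a with
  | zero => simp [hq.1]
  | succ k ih => have := hq.2.2 k; omega

lemma q_mono : Monotone q := by
  apply monotone_nat_of_le_succ
  intro a; have := hq.2.2 a; have := q_pos hq a; omega

end q


lemma phi_zero : phi 0 = 0 := by simp [phi]

variable {n : ℕ} {q : ℕ → ℕ}


lemma fS_singleton (i : Fin n) (y : Fin n → ℝ) : fS n q {i} y = y i - q 1 := by
  simp [fS]; ring

lemma fS_sub (S : Finset (Fin n)) (y z : Fin n → ℝ) :
    fS n q S y - fS n q S z = ∑ i ∈ S, (y i - z i) := by
  simp [fS, Finset.sum_sub_distrib]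

lemma Fmap_pos {y : Fin n → ℝ} (hy : y ∈ Omega n q) (i : Fin n) : 0 < Fmap n q y i := by
  apply Finset.prod_pos
  intro S hS
  exact hy S ⟨i, (Finset.mem_filter.mp hS).2⟩

lemma log_Fmap {y : Fin n → ℝ} (hy : y ∈ Omega n q) (i : Fin n) :
    Real.log (Fmap n q y i)
      = ∑ S ∈ Finset.univ.filter (fun S : Finset (Fin n) => i ∈ S), Real.log (fS n q S y) :=
  Real.log_prod fun S hS => ne_of_gt (hy S ⟨i, (Finset.mem_filter.mp hS).2⟩)

lemma sum_swap_filter (g : Finset (Fin n) → ℝ) (w : Fin n → ℝ) :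
    ∑ i, (∑ S ∈ Finset.univ.filter (fun S : Finset (Fin n) => i ∈ S), g S) * w i
      = ∑ S : Finset (Fin n), g S * ∑ i ∈ S, w i := by
  have h1 : ∀ i, (∑ S ∈ Finset.univ.filter (fun S : Finset (Fin n) => i ∈ S), g S) * w i
      = ∑ S : Finset (Fin n), (if i ∈ S then g S * w i else 0) := by
    intro i
    rw [Finset.sum_filter, Finset.sum_mul]
    congr 1; ext S
    by_cases h : i ∈ S <;> simp [h]
  simp_rw [h1]
  rw [Finset.sum_comm]
  congr 1; ext S
  rw [Finset.mul_sum, ← Finset.sum_filter]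
  congr 1
  simp [Finset.filter_mem_eq_inter]

lemma injOn_Omega : Set.InjOn (Fmap n q) (Omega n q) := by
  intro y hy z hz hF
  by_contra hne
  have hex : ∃ i, y i ≠ z i := by
    by_contra h; push_neg at h; exact hne (funext h)
  obtain ⟨i0, hi0⟩ := hex
  -- the key sum
  set D : Finset (Fin n) → ℝ :=
    fun S => (Real.log (fS n q S y) - Real.log (fS n q S z)) * (fS n q S y - fS n q S z) with hD
  have hterm : ∀ S : Finset (Fin n), 0 ≤ D S := by
    intro S
    rcases S.eq_empty_or_nonempty with h | h
    · simp [hD, h, fS]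
    · have hy' := hy S h
      have hz' := hz S h
      rcases le_total (fS n q S y) (fS n q S z) with hle | hle
      · have := Real.log_le_log hy' hle
        exact mul_nonneg_of_nonpos_of_nonpos (by linarith) (by linarith)
      · have := Real.log_le_log hz' hle
        apply mul_nonneg <;> linarith
  have hstrict : 0 < D {i0} := by
    have hy' := hy {i0} (Finset.singleton_nonempty i0)
    have hz' := hz {i0} (Finset.singleton_nonempty i0)
    rw [hD]
    rcases lt_or_gt_of_ne hi0 with hlt | hlt
    · have h2 : fS n q {i0} y < fS n q {i0} z := by rw [fS_singleton, fS_singleton]; linarith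
      have := Real.log_lt_log hy' h2
      apply mul_pos_of_neg_of_neg <;> linarith
    · have h2 : fS n q {i0} z < fS n q {i0} y := by rw [fS_singleton, fS_singleton]; linarith
      have := Real.log_lt_log hz' h2
      apply mul_pos <;> linarith
  have hzero : ∑ S : Finset (Fin n), D S = 0 := by
    have := sum_swap_filter (n := n)
      (fun S => Real.log (fS n q S y) - Real.log (fS n q S z)) (fun i => y i - z i)
    simp_rw [hD, fS_sub]
    rw [← this]
    apply Finset.sum_eq_zero
    intro i _
    have h1 : Real.log (Fmap n q y i) = Real.log (Fmap n q z i) := by rw [hF]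
    rw [log_Fmap hy, log_Fmap hz] at h1
    rw [Finset.sum_sub_distrib, h1]
    simp
  have : 0 < ∑ S : Finset (Fin n), D S :=
    Finset.sum_pos' (fun S _ => hterm S) ⟨{i0}, Finset.mem_univ _, hstrict⟩
  rw [hzero] at this
  exact lt_irrefl 0 this


def Kbar (n : ℕ) (q : ℕ → ℕ) : Set (Fin n → ℝ) :=
  {y | ∀ S : Finset (Fin n), S.Nonempty → 0 ≤ fS n q S y}

lemma fS_cont (S : Finset (Fin n)) : Continuous (fS n q S) :=
  continuous_const.add (continuous_finset_sum S fun i _ => continuous_apply i)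

lemma isClosed_Kbar : IsClosed (Kbar n q) := by
  have : Kbar n q = ⋂ S : Finset (Fin n), ⋂ _ : S.Nonempty, {y | 0 ≤ fS n q S y} := by
    ext y; simp [Kbar, Set.mem_iInter]
  rw [this]
  exact isClosed_iInter fun S => isClosed_iInter fun _ =>
    isClosed_le continuous_const (fS_cont S)

lemma coord_le (hq : qCond q) {y : Fin n → ℝ} (hy : y ∈ Kbar n q) (i : Fin n) :
    (q 1 : ℝ) ≤ y i := by
  have := hy {i} (Finset.singleton_nonempty i)
  simpa [fS] using this

lemma coord_nonneg (hq : qCond q) {y : Fin n → ℝ} (hy : y ∈ Kbar n q) (i : Fin n) :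
    0 ≤ y i :=
  le_trans (by positivity) (coord_le hq hy i)

lemma fS_lb (hq : qCond q) {y : Fin n → ℝ} (hy : y ∈ Kbar n q) {S : Finset (Fin n)}
    {i : Fin n} (hi : i ∈ S) : y i - q n ≤ fS n q S y := by
  have h1 : y i ≤ ∑ j ∈ S, y j :=
    Finset.single_le_sum (fun j _ => coord_nonneg hq hy j) hi
  have h2 : (q S.card : ℝ) ≤ q n := by
    have : S.card ≤ n := le_trans (Finset.card_le_univ S) (by simp)
    exact_mod_cast q_mono hq this
  simp only [fS]; linarith

lemma Omega_subset_Kbar : Omega n q ⊆ Kbar n q :=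
  fun y hy S hS => (hy S hS).le

lemma y0_mem (hq : qCond q) : (fun _ => (q n : ℝ) + 1) ∈ Omega n q := by
  intro S hS
  have hc1 : 1 ≤ S.card := Finset.one_le_card.mpr hS
  have h2 : (q S.card : ℝ) ≤ q n := by
    have : S.card ≤ n := le_trans (Finset.card_le_univ S) (by simp)
    exact_mod_cast q_mono hq this
  have h3 : ∑ _i ∈ S, ((q n : ℝ) + 1) = S.card * ((q n : ℝ) + 1) := by
    rw [Finset.sum_const, nsmul_eq_mul]
  have h4 : (q n : ℝ) + 1 ≤ S.card * ((q n : ℝ) + 1) := by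
    have : (1 : ℝ) ≤ S.card := by exact_mod_cast hc1
    nlinarith [Nat.cast_nonneg (α := ℝ) (q n)]
  simp only [fS, h3]; linarith

lemma fS_seg (S : Finset (Fin n)) (y w : Fin n → ℝ) (t : ℝ) :
    fS n q S (fun i => y i + t * (w i - y i))
      = fS n q S y + t * (fS n q S w - fS n q S y) := by
  simp only [fS, Finset.sum_add_distrib, ← Finset.mul_sum, Finset.sum_sub_distrib]
  ring

lemma fS_update (S : Finset (Fin n)) (y : Fin n → ℝ) (i : Fin n) (t : ℝ) :
    fS n q S (Function.update y i (y i + t))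
      = fS n q S y + if i ∈ S then t else 0 := by
  by_cases hi : i ∈ S
  · simp only [fS, hi, if_pos]
    rw [Finset.sum_update_of_mem hi]
    rw [← Finset.sum_erase_add S y hi, Finset.sdiff_singleton_eq_erase]
    ring
  · simp only [fS, hi, if_neg, not_false_iff, add_zero]
    congr 1
    apply Finset.sum_congr rfl
    intro j hj
    rw [Function.update_of_ne]
    intro h; subst h; exact hi hj

noncomputable def Psi (n : ℕ) (q : ℕ → ℕ) (c : Fin n → ℝ) (y : Fin n → ℝ) : ℝ :=
  (∑ S : Finset (Fin n), phi (fS n q S y)) - ∑ i, c i * y i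

lemma Psi_cont (c : Fin n → ℝ) : Continuous (Psi n q c) := by
  apply Continuous.sub
  · exact continuous_finset_sum _ fun S _ => phi_cont.comp (fS_cont S)
  · exact continuous_finset_sum _ fun i _ => continuous_const.mul (continuous_apply i)

lemma phi_fS_ge (hq : qCond q) {y : Fin n → ℝ} (hy : y ∈ Kbar n q) (S : Finset (Fin n)) :
    -1 ≤ phi (fS n q S y) := by
  rcases S.eq_empty_or_nonempty with h | h
  · subst h
    simp [fS, hq.1, phi]
  · exact phi_ge (hy S h)

lemma sum_phi_ge (hq : qCond q) {y : Fin n → ℝ} (hy : y ∈ Kbar n q) :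
    phi (fS n q Finset.univ y) - 2 ^ n ≤ ∑ S : Finset (Fin n), phi (fS n q S y) := by
  rw [← Finset.sum_erase_add Finset.univ _ (Finset.mem_univ (Finset.univ : Finset (Fin n)))]
  have h1 : ∀ S ∈ (Finset.univ : Finset (Finset (Fin n))).erase Finset.univ,
      (-1 : ℝ) ≤ phi (fS n q S y) := fun S _ => phi_fS_ge hq hy S
  have h2 := Finset.card_nsmul_le_sum _ _ _ h1
  have h3 : ((Finset.univ : Finset (Finset (Fin n))).erase Finset.univ).card ≤ 2 ^ n := by
    calc _ ≤ (Finset.univ : Finset (Finset (Fin n))).card := Finset.card_erase_le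
    _ = 2 ^ n := by simp
  have h4 : (((Finset.univ : Finset (Finset (Fin n))).erase Finset.univ).card : ℝ) • (-1 : ℝ)
      = -(((Finset.univ : Finset (Finset (Fin n))).erase Finset.univ).card : ℝ) := by simp
  have h5 : -(2:ℝ)^n ≤ ∑ S ∈ (Finset.univ : Finset (Finset (Fin n))).erase Finset.univ,
      phi (fS n q S y) := by
    refine le_trans ?_ h2
    rw [nsmul_eq_mul]
    have : ((((Finset.univ : Finset (Finset (Fin n))).erase Finset.univ).card : ℝ)) ≤ 2 ^ n := by
      exact_mod_cast h3
    nlinarith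
  linarith


set_option maxHeartbeats 2000000 in
lemma exists_preimage (hq : qCond q) (x : Fin n → ℝ) (hx : ∀ i, 0 < x i) :
    ∃ y ∈ Omega n q, Fmap n q y = x := by
  classical
  set c : Fin n → ℝ := fun i => Real.log (x i) with hc
  set C : ℝ := ∑ i, |c i| with hCdef
  have hC0 : 0 ≤ C := Finset.sum_nonneg fun i _ => abs_nonneg _
  set y0 : Fin n → ℝ := fun _ => (q n : ℝ) + 1 with hy0def
  have hy0Ω : y0 ∈ Omega n q := y0_mem hq
  set M : ℝ := max (C + 2) (Psi n q c y0 + 2 ^ n + C * q n + 1) with hM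
  have hM1 : C + 2 ≤ M := le_max_left _ _
  have hM2 : Psi n q c y0 + 2 ^ n + C * q n + 1 ≤ M := le_max_right _ _
  have hM0 : 0 ≤ M := by linarith
  set R : ℝ := (q n : ℝ) + Real.exp M with hR
  have hexpM1 : (1:ℝ) ≤ Real.exp M := Real.one_le_exp hM0
  have hexpM : M + 1 ≤ Real.exp M := by have := Real.add_one_le_exp M; linarith
  have hqn0 : (0:ℝ) ≤ (q n : ℝ) := Nat.cast_nonneg _
  set K : Set (Fin n → ℝ) := Set.Icc 0 (fun _ => R) ∩ Kbar n q with hK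
  have hKcompact : IsCompact K := IsCompact.inter_right isCompact_Icc isClosed_Kbar
  have hy0K : y0 ∈ K := by
    refine ⟨Set.mem_Icc.mpr ⟨fun i => by positivity, fun i => by
      show (q n : ℝ) + 1 ≤ R; rw [hR]; linarith⟩, Omega_subset_Kbar hy0Ω⟩
  -- coercivity
  have hcoerc : ∀ y ∈ K, ∀ j, R ≤ y j → Psi n q c y0 < Psi n q c y := by
    intro y hyK j hj
    have hyKbar : y ∈ Kbar n q := hyK.2
    have hyle : ∀ i, y i ≤ R := fun i => (Set.mem_Icc.mp hyK.1).2 i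
    have hyge : ∀ i, (0:ℝ) ≤ y i := fun i => (Set.mem_Icc.mp hyK.1).1 i
    have hfu : R - q n ≤ fS n q Finset.univ y := by
      have := fS_lb hq hyKbar (Finset.mem_univ j); linarith
    have hfupos : (1:ℝ) ≤ R - (q n : ℝ) := by rw [hR]; linarith
    have hphi : phi (R - q n) ≤ phi (fS n q Finset.univ y) := by
      have h1 := phi_diff_ge (u := R - (q n : ℝ)) (v := fS n q Finset.univ y)
        (by linarith) (by linarith)
      have hlog : 0 ≤ Real.log (R - (q n : ℝ)) := Real.log_nonneg hfupos
      nlinarith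
    have hlin : ∑ i, c i * y i ≤ C * R := by
      calc ∑ i, c i * y i ≤ ∑ i, |c i| * R := by
            apply Finset.sum_le_sum; intro i _
            have h1 : c i * y i ≤ |c i| * y i :=
              mul_le_mul_of_nonneg_right (le_abs_self _) (hyge i)
            have h2 : |c i| * y i ≤ |c i| * R :=
              mul_le_mul_of_nonneg_left (hyle i) (abs_nonneg _)
            linarith
        _ = C * R := by rw [← Finset.sum_mul]
    have hsum := sum_phi_ge hq hyKbar
    have hphiv : phi (R - (q n : ℝ)) = Real.exp M * M - Real.exp M := by
      have : R - (q n : ℝ) = Real.exp M := by rw [hR]; ring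
      rw [this]; simp only [phi, Real.log_exp]
    have key : Psi n q c y0 + 1 ≤ Real.exp M * M - Real.exp M - 2 ^ n - C * R := by
      rw [hR]
      nlinarith [mul_le_mul_of_nonneg_left hM1 (Real.exp_pos M).le]
    have hPsiy : Real.exp M * M - Real.exp M - 2 ^ n - C * R ≤ Psi n q c y := by
      show _ ≤ (∑ S : Finset (Fin n), phi (fS n q S y)) - ∑ i, c i * y i
      rw [← hphiv]
      linarith
    linarith
  -- minimizer
  obtain ⟨ys, hysK, hysmin⟩ :=
    hKcompact.exists_isMinOn ⟨y0, hy0K⟩ (Psi_cont c).continuousOn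
  have hmin : ∀ z ∈ K, Psi n q c ys ≤ Psi n q c z := fun z hz => isMinOn_iff.mp hysmin z hz
  have hysKbar : ys ∈ Kbar n q := hysK.2
  have hysbox : ∀ i, (0:ℝ) ≤ ys i ∧ ys i ≤ R :=
    fun i => ⟨(Set.mem_Icc.mp hysK.1).1 i, (Set.mem_Icc.mp hysK.1).2 i⟩
  have hltR : ∀ i, ys i < R := by
    intro i
    by_contra h
    push_neg at h
    have h1 := hmin y0 hy0K
    have h2 := hcoerc ys hysK i h
    linarith
  -- Step B: ys lies in the open region Omega
  have hysOmega : ys ∈ Omega n q := by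
    intro S0 hS0ne
    by_contra hcon
    push_neg at hcon
    have ha0 : fS n q S0 ys = 0 := le_antisymm hcon (hysKbar S0 hS0ne)
    set a : Finset (Fin n) → ℝ := fun S => fS n q S ys with hadef
    set b : Finset (Fin n) → ℝ := fun S => fS n q S y0 with hbdef
    set Z : Finset (Finset (Fin n)) :=
      Finset.univ.filter (fun S => S.Nonempty ∧ fS n q S ys = 0) with hZ
    have hS0Z : S0 ∈ Z := by
      simp only [hZ, Finset.mem_filter]
      exact ⟨Finset.mem_univ _, hS0ne, ha0⟩
    have hZne : ∀ S ∈ Z, S.Nonempty ∧ a S = 0 := by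
      intro S hS
      have h := (Finset.mem_filter.mp hS).2
      exact ⟨h.1, h.2⟩
    set A : ℝ := ∑ S ∈ Z, b S with hA
    have hbposn : ∀ S : Finset (Fin n), S.Nonempty → 0 < b S := fun S hS => hy0Ω S hS
    have hApos : 0 < A :=
      Finset.sum_pos (fun S hS => hbposn S (hZne S hS).1) ⟨S0, hS0Z⟩
    set B1 : ℝ := ∑ S ∈ Z, |b S * Real.log (b S)| with hB1
    set B2 : ℝ := ∑ S : Finset (Fin n),
      |b S - a S| * (|Real.log (a S + b S)| + |Real.log (a S / 2)|) with hB2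
    set L : ℝ := |∑ i, c i * (y0 i - ys i)| with hL
    have hB1n : 0 ≤ B1 := Finset.sum_nonneg fun S _ => abs_nonneg _
    have hB2n : 0 ≤ B2 := Finset.sum_nonneg fun S _ =>
      mul_nonneg (abs_nonneg _) (by positivity)
    have hLn : 0 ≤ L := abs_nonneg _
    set t : ℝ := min (1/2) (Real.exp (-(B1 + B2 + L + 1) / A)) with ht
    have ht0 : 0 < t := lt_min (by norm_num) (Real.exp_pos _)
    have ht2 : t ≤ 1/2 := min_le_left _ _
    have hlogt : Real.log t ≤ -(B1 + B2 + L + 1) / A := by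
      calc Real.log t ≤ Real.log (Real.exp (-(B1 + B2 + L + 1) / A)) :=
            Real.log_le_log ht0 (min_le_right _ _)
        _ = -(B1 + B2 + L + 1) / A := Real.log_exp _
    have hAlogt : A * Real.log t ≤ -(B1 + B2 + L + 1) := by
      have h1 := mul_le_mul_of_nonneg_left hlogt hApos.le
      have h2 : A * (-(B1 + B2 + L + 1) / A) = -(B1 + B2 + L + 1) := by
        field_simp
      linarith
    set yt : Fin n → ℝ := fun i => ys i + t * (y0 i - ys i) with hyt
    have hfyt : ∀ S, fS n q S yt = a S + t * (b S - a S) := fun S => fS_seg S ys y0 t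
    have hytK : yt ∈ K := by
      constructor
      · rw [Set.mem_Icc]
        constructor <;> intro i
        · show (0:ℝ) ≤ ys i + t * (y0 i - ys i)
          have h1 := (hysbox i).1
          have h2 : (0:ℝ) ≤ y0 i := by
            show (0:ℝ) ≤ (q n : ℝ) + 1; linarith
          nlinarith
        · show ys i + t * (y0 i - ys i) ≤ R
          have h1 := (hysbox i).2
          have h2 : y0 i ≤ R := by
            show (q n : ℝ) + 1 ≤ R; rw [hR]; linarith
          nlinarith
      · intro S hSne
        rw [hfyt]
        have h1 : 0 ≤ a S := hysKbar S hSne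
        have h2 : 0 < b S := hbposn S hSne
        nlinarith
    have hterm : ∀ S : Finset (Fin n),
        phi (fS n q S yt) - phi (a S) ≤
          (if S ∈ Z then t * (b S * (Real.log t + Real.log (b S)))
           else t * (|b S - a S| * (|Real.log (a S + b S)| + |Real.log (a S / 2)|))) := by
      intro S
      by_cases hSZ : S ∈ Z
      · rw [if_pos hSZ]
        obtain ⟨hSne, haS⟩ := hZne S hSZ
        have hbS := hbposn S hSne
        have h1 : fS n q S yt = t * b S := by rw [hfyt, haS]; ring
        rw [h1, haS, phi_zero]
        have h2 : phi (t * b S) = t * b S * (Real.log t + Real.log (b S)) - t * b S := by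
          simp only [phi]
          rw [Real.log_mul (ne_of_gt ht0) (ne_of_gt hbS)]
        rw [h2]
        have h3 : 0 < t * b S := by positivity
        nlinarith
      · rw [if_neg hSZ]
        rcases S.eq_empty_or_nonempty with hSe | hSne
        · subst hSe
          have h1 : fS n q ∅ yt = a ∅ := by
            rw [hfyt]
            have hba : b ∅ = a ∅ := by simp [hbdef, hadef, fS]
            rw [hba]; ring
          rw [h1]
          simp only [sub_self]
          positivity
        · have haS : 0 < a S := by
            rcases (hysKbar S hSne).lt_or_eq with h | h
            · exact h
            · exfalso; apply hSZ
              simp only [hZ, Finset.mem_filter]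
              exact ⟨Finset.mem_univ _, hSne, h.symm⟩
          have hbS := hbposn S hSne
          set m : ℝ := a S + t * (b S - a S) with hm
          have hmpos : 0 < m := by nlinarith
          have h1 : phi (fS n q S yt) - phi (a S) ≤ t * (b S - a S) * Real.log m := by
            have h0 := phi_diff_le (u := a S) (v := m) haS.le hmpos
            have hms : m - a S = t * (b S - a S) := by rw [hm]; ring
            rw [hfyt, ← hm]
            calc phi m - phi (a S) ≤ (m - a S) * Real.log m := h0
              _ = t * (b S - a S) * Real.log m := by rw [hms]
          have h2 : (b S - a S) * Real.log m ≤
              |b S - a S| * (|Real.log (a S + b S)| + |Real.log (a S / 2)|) := by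
            rcases le_total (a S) (b S) with hab | hab
            · have hmab : m ≤ a S + b S := by nlinarith
              have hlm : Real.log m ≤ Real.log (a S + b S) := Real.log_le_log hmpos hmab
              calc (b S - a S) * Real.log m ≤ (b S - a S) * Real.log (a S + b S) :=
                    mul_le_mul_of_nonneg_left hlm (by linarith)
                _ ≤ |(b S - a S) * Real.log (a S + b S)| := le_abs_self _
                _ = |b S - a S| * |Real.log (a S + b S)| := abs_mul _ _
                _ ≤ |b S - a S| * (|Real.log (a S + b S)| + |Real.log (a S / 2)|) := by
                    apply mul_le_mul_of_nonneg_left _ (abs_nonneg _)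
                    linarith [abs_nonneg (Real.log (a S / 2))]
            · have hm2 : a S / 2 ≤ m := by nlinarith
              have hlm : Real.log (a S / 2) ≤ Real.log m :=
                Real.log_le_log (by positivity) hm2
              calc (b S - a S) * Real.log m ≤ (b S - a S) * Real.log (a S / 2) :=
                    mul_le_mul_of_nonpos_left hlm (by linarith)
                _ ≤ |(b S - a S) * Real.log (a S / 2)| := le_abs_self _
                _ = |b S - a S| * |Real.log (a S / 2)| := abs_mul _ _
                _ ≤ |b S - a S| * (|Real.log (a S + b S)| + |Real.log (a S / 2)|) := by
                    apply mul_le_mul_of_nonneg_left _ (abs_nonneg _)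
                    linarith [abs_nonneg (Real.log (a S + b S))]
          calc phi (fS n q S yt) - phi (a S) ≤ t * (b S - a S) * Real.log m := h1
            _ = t * ((b S - a S) * Real.log m) := by ring
            _ ≤ t * (|b S - a S| * (|Real.log (a S + b S)| + |Real.log (a S / 2)|)) :=
                mul_le_mul_of_nonneg_left h2 ht0.le
    have hZfilter : Finset.univ.filter (fun S : Finset (Fin n) => S ∈ Z) = Z := by
      ext S; simp
    have hsumbound : ∑ S : Finset (Fin n), (phi (fS n q S yt) - phi (a S))
        ≤ t * A * Real.log t + t * B1 + t * B2 := by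
      have h1 : ∑ S : Finset (Fin n), (phi (fS n q S yt) - phi (a S))
          ≤ ∑ S : Finset (Fin n),
            (if S ∈ Z then t * (b S * (Real.log t + Real.log (b S)))
             else t * (|b S - a S| * (|Real.log (a S + b S)| + |Real.log (a S / 2)|))) :=
        Finset.sum_le_sum fun S _ => hterm S
      rw [Finset.sum_ite, hZfilter] at h1
      have hZsum : ∑ S ∈ Z, t * (b S * (Real.log t + Real.log (b S)))
          ≤ t * A * Real.log t + t * B1 := by
        have he : ∀ S ∈ Z, t * (b S * (Real.log t + Real.log (b S)))
            = t * Real.log t * b S + t * (b S * Real.log (b S)) := fun S _ => by ring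
        rw [Finset.sum_congr rfl he, Finset.sum_add_distrib, ← Finset.mul_sum, ← Finset.mul_sum,
          ← hA]
        have h2 : ∑ S ∈ Z, b S * Real.log (b S) ≤ B1 :=
          Finset.sum_le_sum fun S _ => le_abs_self _
        nlinarith [mul_le_mul_of_nonneg_left h2 ht0.le]
      have hNZsum : ∑ S ∈ Finset.univ.filter (fun S : Finset (Fin n) => ¬ S ∈ Z),
            t * (|b S - a S| * (|Real.log (a S + b S)| + |Real.log (a S / 2)|))
          ≤ t * B2 := by
        rw [← Finset.mul_sum]
        apply mul_le_mul_of_nonneg_left _ ht0.le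
        apply Finset.sum_le_sum_of_subset_of_nonneg (Finset.filter_subset _ _)
        intro S _ _
        positivity
      linarith
    have hlin2 : ∑ i, c i * yt i = ∑ i, c i * ys i + t * ∑ i, c i * (y0 i - ys i) := by
      rw [Finset.mul_sum, ← Finset.sum_add_distrib]
      apply Finset.sum_congr rfl
      intro i _
      show c i * (ys i + t * (y0 i - ys i)) = _
      ring
    have hdiff : Psi n q c yt - Psi n q c ys
        = (∑ S : Finset (Fin n), (phi (fS n q S yt) - phi (a S)))
          - t * ∑ i, c i * (y0 i - ys i) := by
      simp only [Psi]
      rw [Finset.sum_sub_distrib, hlin2]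
      ring
    have hLbound : - (t * ∑ i, c i * (y0 i - ys i)) ≤ t * L := by
      have h1 : -(∑ i, c i * (y0 i - ys i)) ≤ L := neg_le_abs _
      nlinarith [mul_le_mul_of_nonneg_left h1 ht0.le]
    have hfinal : Psi n q c yt - Psi n q c ys ≤ -t := by
      have h1 : t * A * Real.log t ≤ t * (-(B1 + B2 + L + 1)) := by
        have h0 := mul_le_mul_of_nonneg_left hAlogt ht0.le
        nlinarith
      nlinarith [ht0.le]
    have h3 := hmin yt hytK
    linarith
  -- Step C: first-order conditions
  have hFO : ∀ i, ∑ S ∈ Finset.univ.filter (fun S : Finset (Fin n) => i ∈ S),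
      Real.log (fS n q S ys) = c i := by
    intro i
    set Fi := Finset.univ.filter (fun S : Finset (Fin n) => i ∈ S) with hFi
    have hiFi : ({i} : Finset (Fin n)) ∈ Fi := by simp [hFi]
    have hFine : Fi.Nonempty := ⟨{i}, hiFi⟩
    set ε : ℝ := min (R - ys i) (Fi.inf' hFine (fun S => fS n q S ys)) with hε
    have hεpos : 0 < ε := by
      apply lt_min
      · have := hltR i; linarith
      · rw [Finset.lt_inf'_iff]
        intro S hS
        exact hysOmega S ⟨i, (Finset.mem_filter.mp hS).2⟩
    have hεle : ∀ S ∈ Fi, ε ≤ fS n q S ys := fun S hS =>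
      le_trans (min_le_right _ _) (Finset.inf'_le _ hS)
    have hεR : ε ≤ R - ys i := min_le_left _ _
    have key : ∀ t : ℝ, |t| < ε →
        ((0 < t → c i ≤ ∑ S ∈ Fi, Real.log (fS n q S ys + t)) ∧
         (t < 0 → ∑ S ∈ Fi, Real.log (fS n q S ys + t) ≤ c i)) := by
      intro t htε
      have habs := abs_lt.mp htε
      set yt := Function.update ys i (ys i + t) with hyt
      have hfytc : ∀ S, fS n q S yt = fS n q S ys + if i ∈ S then t else 0 :=
        fun S => fS_update S ys i t
      have hytK : yt ∈ K := by
        constructor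
        · rw [Set.mem_Icc]
          constructor <;> intro j
          · show (0:ℝ) ≤ yt j
            by_cases hj : j = i
            · subst hj
              rw [hyt, Function.update_self]
              have h1 : ε ≤ fS n q {j} ys := hεle {j} (by simp [hFi])
              rw [fS_singleton] at h1
              have h2 : (0:ℝ) ≤ (q 1 : ℝ) := Nat.cast_nonneg _
              linarith [habs.1]
            · rw [hyt, Function.update_of_ne hj]
              exact (hysbox j).1
          · show yt j ≤ R
            by_cases hj : j = i
            · subst hj
              rw [hyt, Function.update_self]
              linarith [habs.2]
            · rw [hyt, Function.update_of_ne hj]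
              exact (hysbox j).2
        · intro S hSne
          rw [hfytc]
          by_cases hiS : i ∈ S
          · rw [if_pos hiS]
            have h1 := hεle S (by simp [hFi, hiS])
            linarith [habs.1]
          · rw [if_neg hiS, add_zero]
            exact hysKbar S hSne
      have hmint := hmin yt hytK
      have hsplit : ∑ S : Finset (Fin n), phi (fS n q S yt)
            - ∑ S : Finset (Fin n), phi (fS n q S ys)
          = ∑ S ∈ Fi, (phi (fS n q S ys + t) - phi (fS n q S ys)) := by
        rw [← Finset.sum_sub_distrib]
        rw [← Finset.sum_filter_add_sum_filter_not Finset.univ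
          (fun S : Finset (Fin n) => i ∈ S)
          (fun S => phi (fS n q S yt) - phi (fS n q S ys))]
        have h2 : ∑ S ∈ Finset.univ.filter (fun S : Finset (Fin n) => ¬ i ∈ S),
            (phi (fS n q S yt) - phi (fS n q S ys)) = 0 := by
          apply Finset.sum_eq_zero
          intro S hS
          rw [hfytc, if_neg (Finset.mem_filter.mp hS).2]
          simp
        rw [h2, add_zero]
        apply Finset.sum_congr rfl
        intro S hS
        rw [hfytc, if_pos (Finset.mem_filter.mp hS).2]
      have hlin3 : ∑ j, c j * yt j - ∑ j, c j * ys j = t * c i := by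
        rw [← Finset.sum_sub_distrib]
        have h1 : ∀ j, c j * yt j - c j * ys j = if j = i then t * c i else 0 := by
          intro j
          by_cases hj : j = i
          · subst hj
            rw [hyt, Function.update_self, if_pos rfl]
            ring
          · rw [hyt, Function.update_of_ne hj, if_neg hj]
            ring
        rw [Finset.sum_congr rfl fun j _ => h1 j, Finset.sum_ite_eq' Finset.univ i]
        simp
      have hdiff2 : Psi n q c yt - Psi n q c ys
          = (∑ S ∈ Fi, (phi (fS n q S ys + t) - phi (fS n q S ys))) - t * c i := by
        simp only [Psi]
        rw [← hsplit, ← hlin3]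
        ring
      have hb : ∀ S ∈ Fi, phi (fS n q S ys + t) - phi (fS n q S ys)
          ≤ t * Real.log (fS n q S ys + t) := by
        intro S hS
        have hSne : S.Nonempty := ⟨i, (Finset.mem_filter.mp hS).2⟩
        have h1 : 0 < fS n q S ys + t := by
          have := hεle S hS; linarith [habs.1]
        have h0 := phi_diff_le (u := fS n q S ys) (v := fS n q S ys + t)
          (hysKbar S hSne) h1
        have h2 : fS n q S ys + t - fS n q S ys = t := by ring
        rw [h2] at h0
        exact h0
      have hchain : 0 ≤ t * (∑ S ∈ Fi, Real.log (fS n q S ys + t)) - t * c i := by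
        have h4 : ∑ S ∈ Fi, (phi (fS n q S ys + t) - phi (fS n q S ys))
            ≤ ∑ S ∈ Fi, t * Real.log (fS n q S ys + t) :=
          Finset.sum_le_sum hb
        rw [← Finset.mul_sum] at h4
        linarith [hmint, hdiff2.ge, hdiff2.le]
      constructor
      · intro htpos
        nlinarith [hchain, htpos]
      · intro htneg
        nlinarith [hchain, htneg]
    have hlim : Filter.Tendsto (fun t => ∑ S ∈ Fi, Real.log (fS n q S ys + t)) (nhds 0)
        (nhds (∑ S ∈ Fi, Real.log (fS n q S ys))) := by
      have h1 : ∀ S ∈ Fi, Filter.Tendsto (fun t : ℝ => Real.log (fS n q S ys + t)) (nhds 0)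
          (nhds (Real.log (fS n q S ys))) := by
        intro S hS
        have hpos : 0 < fS n q S ys := hysOmega S ⟨i, (Finset.mem_filter.mp hS).2⟩
        have hc2 : ContinuousAt (fun u : ℝ => Real.log (fS n q S ys + u)) 0 := by
          apply ContinuousAt.log
          · exact (continuous_const.add continuous_id).continuousAt
          · simpa using ne_of_gt hpos
        have := hc2.tendsto
        simpa using this
      exact tendsto_finset_sum Fi h1
    have hge : c i ≤ ∑ S ∈ Fi, Real.log (fS n q S ys) := by
      have hlim1 : Filter.Tendsto (fun t => ∑ S ∈ Fi, Real.log (fS n q S ys + t))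
          (nhdsWithin (0:ℝ) (Set.Ioi 0)) (nhds (∑ S ∈ Fi, Real.log (fS n q S ys))) :=
        hlim.mono_left nhdsWithin_le_nhds
      apply ge_of_tendsto hlim1
      have hmem : Set.Ioo (0:ℝ) ε ∈ nhdsWithin (0:ℝ) (Set.Ioi 0) :=
        Ioo_mem_nhdsGT_of_mem ⟨le_refl 0, hεpos⟩
      filter_upwards [hmem] with u hu
      exact (key u (by rw [abs_of_pos hu.1]; exact hu.2)).1 hu.1
    have hle : ∑ S ∈ Fi, Real.log (fS n q S ys) ≤ c i := by
      have hlim2 : Filter.Tendsto (fun t => ∑ S ∈ Fi, Real.log (fS n q S ys + t))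
          (nhdsWithin (0:ℝ) (Set.Iio 0)) (nhds (∑ S ∈ Fi, Real.log (fS n q S ys))) :=
        hlim.mono_left nhdsWithin_le_nhds
      apply le_of_tendsto hlim2
      have hmem : Set.Ioo (-ε) (0:ℝ) ∈ nhdsWithin (0:ℝ) (Set.Iio 0) :=
        Ioo_mem_nhdsLT_of_mem ⟨neg_lt_zero.mpr hεpos, le_refl 0⟩
      filter_upwards [hmem] with u hu
      exact (key u (by rw [abs_of_neg hu.2]; linarith [hu.1])).2 hu.2
    linarith
  refine ⟨ys, hysOmega, ?_⟩
  funext i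
  have h1 : Real.log (Fmap n q ys i) = c i := by
    rw [log_Fmap hysOmega i]
    exact hFO i
  have h2 := Real.exp_log (Fmap_pos hysOmega i)
  rw [← h2, h1]
  exact Real.exp_log (hx i)

end FmapAux

theorem Fmap_bijection_Omega'_onto_simplex
    (n : ℕ) (hn : 1 ≤ n) (q : ℕ → ℕ) (hq : qCond q) :
    Set.BijOn (Fmap n q) (Omega' n q) (simplex' n) ∧
    Fmap n q ⁻¹' (simplex' n) ∩ Omega n q = Omega' n q := by
  constructor
  · refine ⟨?_, ?_, ?_⟩
    · intro y hy
      exact ⟨fun i => FmapAux.Fmap_pos hy.1 i, hy.2⟩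
    · exact Set.InjOn.mono Set.inter_subset_left FmapAux.injOn_Omega
    · intro x hx
      obtain ⟨y, hyΩ, hFy⟩ := FmapAux.exists_preimage hq x hx.1
      refine ⟨y, ⟨hyΩ, ?_⟩, hFy⟩
      show ∑ i, Fmap n q y i < 1
      simp only [hFy]
      exact hx.2
  · ext y
    constructor
    · rintro ⟨hy1, hy2⟩
      exact ⟨hy2, hy1.2⟩
    · rintro ⟨hy1, hy2⟩
      exact ⟨⟨fun i => FmapAux.Fmap_pos hy1 i, hy2⟩, hy1⟩
end
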